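/- arXiv:1610.00888 — 6 statements merged into one kernel-verified Lean document; each statement's English description precedes it below -/
import Mathlib

section
/- Gordan-type alternative: Suppose Λ and X are nonempty sets and {f_λ}_{λ∈Λ} is a family of real-valued functions on X that is infsup-convex on X and such that for every x ∈ X, the function λ ↦ f_λ(x) is bounded. Then exactly one of the following holds: (a1) there exists x ∈ X with sup_{λ∈Λ} f_λ(x) < 0; (a2) there exists a positive linear functional L on ℓ^∞(Λ) with L(𝟏) = 1 such that inf_{x∈X} L({f_λ(x)}_{λ∈Λ}) ≥ 0. -/
open scoped ENNReal

/-- The constant-one function in `ℓ^∞(Λ)`. -/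
noncomputable def lpinfOne (Λ : Type*) : lp (fun _ : Λ => ℝ) ∞ :=
  ⟨fun _ => (1 : ℝ), memℓp_infty ⟨1, by rintro x ⟨l, rfl⟩; simp⟩⟩

/-- A family `{f_λ}` of real-valued functions on `X` is infsup-convex on `X`. -/
def InfSupConvex {Λ X : Type*} (f : Λ → X → ℝ) : Prop :=
  ∀ m : ℕ, 0 < m → ∀ t : Fin m → ℝ, (∀ j, 0 ≤ t j) → (∑ j, t j) = 1 →
    ∀ x : Fin m → X,
      ⨅ x' : X, ⨆ l, (f l x' : EReal) ≤ ⨆ l, ((∑ j, t j * f l (x j) : ℝ) : EReal)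

section Aux

variable {Λ : Type*} [Nonempty Λ]

local notation "EL" => lp (fun _ : Λ => ℝ) ∞

lemma lpinfOne_apply (l : Λ) : (lpinfOne Λ) l = 1 := rfl

/-- The sup functional on `ℓ^∞(Λ)`. -/
noncomputable def supF (Φ : lp (fun _ : Λ => ℝ) ∞) : ℝ := ⨆ l, Φ l

lemma lp_bddAbove (Φ : lp (fun _ : Λ => ℝ) ∞) :
    BddAbove (Set.range fun l => Φ l) := by
  refine ⟨‖Φ‖, ?_⟩
  rintro _ ⟨l, rfl⟩
  have := lp.norm_apply_le_norm (E := fun _ : Λ => ℝ) ENNReal.top_ne_zero Φ l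
  rw [Real.norm_eq_abs] at this
  exact (le_abs_self _).trans this

lemma le_supF (Φ : lp (fun _ : Λ => ℝ) ∞) (l : Λ) : Φ l ≤ supF Φ :=
  le_ciSup (lp_bddAbove Φ) l

lemma supF_le {Φ : lp (fun _ : Λ => ℝ) ∞} {c : ℝ} (h : ∀ l, Φ l ≤ c) : supF Φ ≤ c :=
  ciSup_le h

lemma supF_add (Φ Ψ : lp (fun _ : Λ => ℝ) ∞) : supF (Φ + Ψ) ≤ supF Φ + supF Ψ := by
  refine supF_le fun l => ?_
  have h : (Φ + Ψ) l = Φ l + Ψ l := congrFun (lp.coeFn_add Φ Ψ) l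
  rw [h]
  exact add_le_add (le_supF _ _) (le_supF _ _)

lemma supF_smul_le {c : ℝ} (hc : 0 ≤ c) (Φ : lp (fun _ : Λ => ℝ) ∞) :
    supF (c • Φ) ≤ c * supF Φ := by
  refine supF_le fun l => ?_
  have h : (c • Φ) l = c * Φ l := congrFun (lp.coeFn_smul c Φ) l
  rw [h]
  exact mul_le_mul_of_nonneg_left (le_supF _ _) hc

lemma supF_smul {c : ℝ} (hc : 0 < c) (Φ : lp (fun _ : Λ => ℝ) ∞) :
    supF (c • Φ) = c * supF Φ := by
  refine le_antisymm (supF_smul_le hc.le Φ) ?_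
  have h := supF_smul_le (c := c⁻¹) (by positivity) (c • Φ)
  rw [inv_smul_smul₀ hc.ne' Φ] at h
  calc c * supF Φ ≤ c * (c⁻¹ * supF (c • Φ)) := by
        exact mul_le_mul_of_nonneg_left h hc.le
    _ = supF (c • Φ) := by field_simp

lemma supF_zero : supF (0 : lp (fun _ : Λ => ℝ) ∞) = 0 := by
  have h : ∀ l : Λ, (0 : lp (fun _ : Λ => ℝ) ∞) l = 0 := fun l =>
    congrFun (lp.coeFn_zero (E := fun _ : Λ => ℝ) (p := ∞)) l
  unfold supF
  simp only [h, ciSup_const]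

lemma supF_one : supF (lpinfOne Λ) = 1 := by
  have h : ∀ l : Λ, (lpinfOne Λ) l = 1 := fun l => rfl
  unfold supF
  simp only [h, ciSup_const]

lemma supF_neg_one : supF (-(lpinfOne Λ)) = -1 := by
  have h : ∀ l : Λ, (-(lpinfOne Λ)) l = -1 := fun l => by
    rw [congrFun (lp.coeFn_neg (lpinfOne Λ)) l]
    simp [lpinfOne_apply]
  unfold supF
  simp only [h, ciSup_const]

/-- The key Hahn–Banach construction, under the assumption that the sup functional is
nonnegative on the convex cone generated by the `F x`. -/
theorem exists_good_L {X : Type*} [Nonempty X] (F : X → lp (fun _ : Λ => ℝ) ∞)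
    (hpos : ∀ (m : ℕ) (t : Fin m → ℝ) (x : Fin m → X), (∀ j, 0 ≤ t j) →
      0 ≤ supF (∑ j, t j • F (x j))) :
    ∃ L : lp (fun _ : Λ => ℝ) ∞ →ₗ[ℝ] ℝ,
      (∀ Φ : lp (fun _ : Λ => ℝ) ∞, (∀ l, 0 ≤ Φ l) → 0 ≤ L Φ) ∧
      L (lpinfOne Λ) = 1 ∧ ∀ x : X, 0 ≤ L (F x) := by
  classical
  -- the convex cone generated by the F x
  set C : Set EL := {Ψ | ∃ (m : ℕ) (t : Fin m → ℝ) (x : Fin m → X),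
    (∀ j, 0 ≤ t j) ∧ Ψ = ∑ j, t j • F (x j)} with hC
  have hzero : (0 : EL) ∈ C := ⟨0, ![], ![], fun j => j.elim0, by simp⟩
  have hFx : ∀ x : X, F x ∈ C := fun x =>
    ⟨1, fun _ => 1, fun _ => x, fun _ => zero_le_one, by simp⟩
  have hCpos : ∀ Ψ ∈ C, 0 ≤ supF Ψ := by
    rintro Ψ ⟨m, t, x, ht, rfl⟩
    exact hpos m t x ht
  have hCadd : ∀ Ψ₁ ∈ C, ∀ Ψ₂ ∈ C, Ψ₁ + Ψ₂ ∈ C := by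
    rintro _ ⟨m₁, t₁, x₁, ht₁, rfl⟩ _ ⟨m₂, t₂, x₂, ht₂, rfl⟩
    refine ⟨m₁ + m₂, Fin.append t₁ t₂, Fin.append x₁ x₂, ?_, ?_⟩
    · intro j
      refine Fin.addCases (fun i => ?_) (fun i => ?_) j
      · rw [Fin.append_left]; exact ht₁ i
      · rw [Fin.append_right]; exact ht₂ i
    · rw [Fin.sum_univ_add]
      congr 1 <;> refine Finset.sum_congr rfl fun j _ => ?_
      · rw [Fin.append_left, Fin.append_left]
      · rw [Fin.append_right, Fin.append_right]
  have hCsmul : ∀ (c : ℝ), 0 ≤ c → ∀ Ψ ∈ C, c • Ψ ∈ C := by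
    rintro c hc _ ⟨m, t, x, ht, rfl⟩
    refine ⟨m, fun j => c * t j, x, fun j => mul_nonneg hc (ht j), ?_⟩
    rw [Finset.smul_sum]
    exact Finset.sum_congr rfl fun j _ => by simp only [smul_smul]
  haveI : Nonempty C := ⟨⟨0, hzero⟩⟩
  -- the penalized sublinear functional
  set q : EL → ℝ := fun Φ => ⨅ Ψ : C, supF (Φ + (Ψ : EL)) with hq
  have hbdd : ∀ Φ : EL, BddBelow (Set.range fun Ψ : C => supF (Φ + (Ψ : EL))) := by
    intro Φ
    refine ⟨-supF (-Φ), ?_⟩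
    rintro _ ⟨Ψ, rfl⟩
    have h1 : supF ((Ψ : EL)) ≤ supF (Φ + (Ψ : EL)) + supF (-Φ) := by
      have := supF_add (Φ + (Ψ : EL)) (-Φ)
      have he : Φ + (Ψ : EL) + -Φ = (Ψ : EL) := by abel
      rwa [he] at this
    have h2 := hCpos _ Ψ.2
    linarith
  have q_le : ∀ (Φ : EL), ∀ Ψ ∈ C, q Φ ≤ supF (Φ + Ψ) := fun Φ Ψ hΨ =>
    ciInf_le (hbdd Φ) ⟨Ψ, hΨ⟩
  have le_q : ∀ (Φ : EL) (c : ℝ), (∀ Ψ ∈ C, c ≤ supF (Φ + Ψ)) → c ≤ q Φ := fun Φ c h =>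
    le_ciInf fun Ψ => h Ψ Ψ.2
  have q_le_supF : ∀ Φ : EL, q Φ ≤ supF Φ := by
    intro Φ
    have := q_le Φ 0 hzero
    rwa [add_zero] at this
  have q_add : ∀ Φ₁ Φ₂ : EL, q (Φ₁ + Φ₂) ≤ q Φ₁ + q Φ₂ := by
    intro Φ₁ Φ₂
    have key : ∀ Ψ₁ ∈ C, ∀ Ψ₂ ∈ C,
        q (Φ₁ + Φ₂) ≤ supF (Φ₁ + Ψ₁) + supF (Φ₂ + Ψ₂) := by
      intro Ψ₁ h₁ Ψ₂ h₂
      have h := q_le (Φ₁ + Φ₂) (Ψ₁ + Ψ₂) (hCadd _ h₁ _ h₂)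
      have he : Φ₁ + Φ₂ + (Ψ₁ + Ψ₂) = (Φ₁ + Ψ₁) + (Φ₂ + Ψ₂) := by abel
      rw [he] at h
      exact h.trans (supF_add _ _)
    have step1 : ∀ Ψ₁ ∈ C, q (Φ₁ + Φ₂) - supF (Φ₁ + Ψ₁) ≤ q Φ₂ := by
      intro Ψ₁ h₁
      refine le_q _ _ fun Ψ₂ h₂ => ?_
      have := key Ψ₁ h₁ Ψ₂ h₂
      linarith
    have step2 : q (Φ₁ + Φ₂) - q Φ₂ ≤ q Φ₁ := by
      refine le_q _ _ fun Ψ₁ h₁ => ?_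
      have := step1 Ψ₁ h₁
      linarith
    linarith
  have q_smul_le : ∀ (c : ℝ), 0 < c → ∀ Φ : EL, q (c • Φ) ≤ c * q Φ := by
    intro c hc Φ
    have h : ∀ Ψ ∈ C, c⁻¹ * q (c • Φ) ≤ supF (Φ + Ψ) := by
      intro Ψ hΨ
      have h1 := q_le (c • Φ) (c • Ψ) (hCsmul c hc.le Ψ hΨ)
      have he : c • Φ + c • Ψ = c • (Φ + Ψ) := by rw [smul_add]
      rw [he, supF_smul hc] at h1
      rw [inv_mul_le_iff₀ hc]
      exact h1
    have h2 := le_q Φ _ h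
    calc q (c • Φ) = c * (c⁻¹ * q (c • Φ)) := by field_simp
      _ ≤ c * q Φ := mul_le_mul_of_nonneg_left h2 hc.le
  have q_smul : ∀ (c : ℝ), 0 < c → ∀ Φ : EL, q (c • Φ) = c * q Φ := by
    intro c hc Φ
    refine le_antisymm (q_smul_le c hc Φ) ?_
    have h := q_smul_le c⁻¹ (by positivity) (c • Φ)
    rw [inv_smul_smul₀ hc.ne' Φ] at h
    calc c * q Φ ≤ c * (c⁻¹ * q (c • Φ)) := mul_le_mul_of_nonneg_left h hc.le
      _ = q (c • Φ) := by field_simp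
  -- Hahn–Banach
  have q0 : 0 ≤ q 0 := by
    refine le_q _ _ fun Ψ hΨ => ?_
    rw [zero_add]
    exact hCpos _ hΨ
  obtain ⟨g, -, hg⟩ := exists_extension_of_le_sublinear
    ⟨(⊥ : Submodule ℝ EL), 0⟩ q q_smul q_add
    (by
      rintro ⟨x, hx⟩
      rw [Submodule.mem_bot] at hx
      subst hx
      simpa using q0)
  have hgp : ∀ Φ : EL, g Φ ≤ supF Φ := fun Φ => (hg Φ).trans (q_le_supF Φ)
  refine ⟨g, ?_, ?_, ?_⟩
  · -- positivity
    intro Φ hΦ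
    have h1 : supF (-Φ) ≤ 0 := by
      refine supF_le fun l => ?_
      have := congrFun (lp.coeFn_neg Φ) l
      simp only [Pi.neg_apply] at this
      rw [this]
      linarith [hΦ l]
    have h2 : g (-Φ) ≤ 0 := (hgp _).trans h1
    rw [map_neg] at h2
    linarith
  · -- L(1) = 1
    have h1 : g (lpinfOne Λ) ≤ 1 := by
      have := hgp (lpinfOne Λ)
      rwa [supF_one] at this
    have h2 : g (-(lpinfOne Λ)) ≤ -1 := by
      have := hgp (-(lpinfOne Λ))
      rwa [supF_neg_one] at this
    rw [map_neg] at h2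
    linarith
  · -- nonneg on F x
    intro x
    have h1 : q (-(F x)) ≤ 0 := by
      have := q_le (-(F x)) (F x) (hFx x)
      rwa [neg_add_cancel, supF_zero] at this
    have h2 := (hg (-(F x))).trans h1
    rw [map_neg] at h2
    linarith

end Aux

/-- Gordan-type alternative for an infsup-convex family with pointwise bounded values:
either some `x` makes `sup_λ f_λ(x) < 0`, or some positive normalized linear functional
`L` on `ℓ^∞(Λ)` satisfies `inf_x L({f_λ(x)}_λ) ≥ 0`, but never both. -/
theorem stmt2 (Λ X : Type*) [Nonempty Λ] [Nonempty X]
    (f : Λ → X → ℝ) (hconv : InfSupConvex f)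
    (F : X → lp (fun _ : Λ => ℝ) ∞) (hF : ∀ x l, F x l = f l x) :
    Xor'
      (∃ x : X, (⨆ l, (f l x : EReal)) < 0)
      (∃ L : lp (fun _ : Λ => ℝ) ∞ →ₗ[ℝ] ℝ,
        (∀ Φ : lp (fun _ : Λ => ℝ) ∞, (∀ l, 0 ≤ Φ l) → 0 ≤ L Φ) ∧
        L (lpinfOne Λ) = 1 ∧
        (0 : EReal) ≤ ⨅ x : X, (L (F x) : EReal)) := by
  classical
  by_cases hA : ∃ x : X, (⨆ l, (f l x : EReal)) < 0
  · -- a1 holds, show a2 fails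
    left
    refine ⟨hA, ?_⟩
    rintro ⟨L, hLpos, hL1, hLinf⟩
    obtain ⟨x₀, hx₀⟩ := hA
    set S : EReal := ⨆ l, (f l x₀ : EReal) with hS
    obtain ⟨l₀⟩ := ‹Nonempty Λ›
    have hSbot : S ≠ ⊥ := by
      have : (f l₀ x₀ : EReal) ≤ S := le_iSup (fun l => (f l x₀ : EReal)) l₀
      intro h
      rw [h, le_bot_iff] at this
      exact EReal.coe_ne_bot _ this
    have hStop : S ≠ ⊤ := (hx₀.trans_le le_top).ne
    set s : ℝ := S.toReal with hs
    have hcoe : (s : EReal) = S := EReal.coe_toReal hStop hSbot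
    have hsneg : s < 0 := by
      have : (s : EReal) < ((0 : ℝ) : EReal) := by
        rw [hcoe]; exact_mod_cast hx₀
      exact EReal.coe_lt_coe_iff.1 this
    have hle : ∀ l, f l x₀ ≤ s := by
      intro l
      have h1 : (f l x₀ : EReal) ≤ S := le_iSup (fun l => (f l x₀ : EReal)) l
      rw [← hcoe] at h1
      exact EReal.coe_le_coe_iff.1 h1
    -- the function s•1 - F x₀ is nonnegative
    set Φ : lp (fun _ : Λ => ℝ) ∞ := s • lpinfOne Λ - F x₀ with hΦ
    have hΦpos : ∀ l, 0 ≤ Φ l := by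
      intro l
      have h1 : Φ l = s * 1 - f l x₀ := by
        have h2 := congrFun (lp.coeFn_sub (s • lpinfOne Λ) (F x₀)) l
        simp only [Pi.sub_apply] at h2
        have h3 := congrFun (lp.coeFn_smul s (lpinfOne Λ)) l
        simp only [Pi.smul_apply, smul_eq_mul] at h3
        rw [hΦ, h2, h3, hF]
        rfl
      rw [h1, mul_one]
      linarith [hle l]
    have h4 : 0 ≤ L Φ := hLpos Φ hΦpos
    have h5 : L Φ = s - L (F x₀) := by
      rw [hΦ, map_sub, map_smul, hL1, smul_eq_mul, mul_one]
    have h6 : 0 ≤ L (F x₀) := by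
      have h7 : (⨅ x : X, (L (F x) : EReal)) ≤ (L (F x₀) : EReal) :=
        iInf_le (fun x => (L (F x) : EReal)) x₀
      have h8 : ((0 : ℝ) : EReal) ≤ (L (F x₀) : EReal) := by
        exact_mod_cast le_trans hLinf h7
      exact EReal.coe_le_coe_iff.1 h8
    linarith
  · -- a1 fails, construct L
    right
    refine ⟨?_, hA⟩
    push_neg at hA
    have h1 : ∀ x : X, (0 : EReal) ≤ ⨆ l, (f l x : EReal) := hA
    -- nonnegativity of supF on the cone
    have hpos : ∀ (m : ℕ) (t : Fin m → ℝ) (x : Fin m → X), (∀ j, 0 ≤ t j) →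
        0 ≤ supF (∑ j, t j • F (x j)) := by
      intro m t x ht
      set Ψ : lp (fun _ : Λ => ℝ) ∞ := ∑ j, t j • F (x j) with hΨ
      have hΨl : ∀ l, Ψ l = ∑ j, t j * f l (x j) := by
        intro l
        have h2 := congrFun (lp.coeFn_sum (fun j => t j • F (x j)) Finset.univ) l
        simp only [Finset.sum_apply] at h2
        rw [hΨ, h2]
        refine Finset.sum_congr rfl fun j _ => ?_
        have h3 := congrFun (lp.coeFn_smul (t j) (F (x j))) l
        simp only [Pi.smul_apply, smul_eq_mul] at h3
        rw [h3, hF]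
      set s : ℝ := ∑ j, t j with hs
      have hsnn : (0 : ℝ) ≤ s := by rw [hs]; exact Finset.sum_nonneg fun j _ => ht j
      rcases eq_or_lt_of_le hsnn with hzero | hspos
      · -- all weights are 0
        have hall : ∀ j ∈ Finset.univ, t j = 0 :=
          (Finset.sum_eq_zero_iff_of_nonneg fun j _ => ht j).1 (by rw [← hs, ← hzero])
        obtain ⟨l₀⟩ := ‹Nonempty Λ›
        have : Ψ l₀ = 0 := by
          rw [hΨl]
          exact Finset.sum_eq_zero fun j hj => by rw [hall j hj, zero_mul]
        calc (0 : ℝ) = Ψ l₀ := this.symm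
          _ ≤ supF Ψ := le_supF Ψ l₀
      · -- positive total mass: use infsup-convexity
        have hm : 0 < m := by
          rcases Nat.eq_zero_or_pos m with h | h
          · exfalso
            subst h
            rw [hs] at hspos
            simp at hspos
          · exact h
        have hsum : (∑ j, t j / s) = 1 := by
          rw [← Finset.sum_div, ← hs, div_self hspos.ne']
        have hkey := hconv m hm (fun j => t j / s)
          (fun j => div_nonneg (ht j) hspos.le) hsum x
        have hlhs : (0 : EReal) ≤ ⨅ x' : X, ⨆ l, (f l x' : EReal) :=
          le_iInf fun x' => h1 x'
        have hrhs : (0 : EReal) ≤ ⨆ l, ((∑ j, t j / s * f l (x j) : ℝ) : EReal) :=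
          le_trans hlhs hkey
        -- the RHS is bounded by supF Ψ / s
        have hbound : (⨆ l, ((∑ j, t j / s * f l (x j) : ℝ) : EReal)) ≤
            ((supF Ψ / s : ℝ) : EReal) := by
          refine iSup_le fun l => ?_
          rw [EReal.coe_le_coe_iff]
          have heq : (∑ j, t j / s * f l (x j)) = Ψ l / s := by
            rw [hΨl, Finset.sum_div]
            exact Finset.sum_congr rfl fun j _ => by ring
          rw [heq]
          gcongr
          exact le_supF Ψ l
        have h9 : ((0 : ℝ) : EReal) ≤ ((supF Ψ / s : ℝ) : EReal) := by
          exact_mod_cast le_trans hrhs hbound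
        have h10 : (0 : ℝ) ≤ supF Ψ / s := EReal.coe_le_coe_iff.1 h9
        have h11 := mul_nonneg h10 hspos.le
        rwa [div_mul_cancel₀ _ hspos.ne'] at h11
    obtain ⟨L, hL1, hL2, hL3⟩ := exists_good_L F hpos
    exact ⟨L, hL1, hL2, le_iInf fun x => EReal.coe_nonneg.2 (hL3 x)⟩
end

section
/- Let X and Λ be nonempty sets and {f_λ}_{λ∈Λ} a family of real-valued functions on X such that for each x ∈ X the function λ ↦ f_λ(x) is bounded, and such that the joint range set { {f_λ(x)}_{λ∈Λ} : x ∈ X } is a convex subset of ℓ^∞(Λ). Then the family {f_λ}_{λ∈Λ} is infsup-convex on X. -/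
open scoped ENNReal

/-- If the joint range set `{ {f_λ(x)}_λ : x ∈ X }` is a convex subset of `ℓ^∞(Λ)`,
then the family `{f_λ}` is infsup-convex on `X`. -/
theorem stmt4 (Λ X : Type*) [Nonempty Λ] [Nonempty X]
    (f : Λ → X → ℝ)
    (F : X → lp (fun _ : Λ => ℝ) ∞) (hF : ∀ x l, F x l = f l x)
    (hrange : Convex ℝ (Set.range F)) :
    InfSupConvex f := by
  intro m hm t ht hsum x
  have hmem : (∑ j, t j • F (x j)) ∈ Set.range F :=
    hrange.sum_mem (fun j _ => ht j) (by simpa using hsum)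
      (fun j _ => Set.mem_range_self _)
  obtain ⟨x', hx'⟩ := hmem
  have key : ∀ l, f l x' = ∑ j, t j * f l (x j) := by
    intro l
    have := congrArg (fun g : lp (fun _ : Λ => ℝ) ∞ => g l) hx'
    simp only [hF] at this
    rw [this, lp.coeFn_sum (fun j => t j • F (x j)) Finset.univ]
    simp [lp.coeFn_smul, hF, Finset.sum_apply]
  calc ⨅ x' : X, ⨆ l, (f l x' : EReal) ≤ ⨆ l, (f l x' : EReal) := iInf_le _ _
    _ = ⨆ l, ((∑ j, t j * f l (x j) : ℝ) : EReal) := by simp_rw [key]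
end

section
/- Z-matrix quadratic families are infsup-convex: Let N ≥ 1, Λ a nonempty set, and for each λ ∈ Λ let A_λ be an N×N real symmetric matrix, b_λ ∈ ℝ^N, c_λ ∈ ℝ such that the (N+1)×(N+1) block matrix [[A_λ, b_λ],[b_λ^T, 2c_λ]] is a Z-matrix (symmetric with nonpositive off-diagonal entries). Define q_λ(x) = (1/2) x^T A_λ x + b_λ^T x + c_λ. If X ⊆ ℝ^N contains the nonnegative orthant ℝ^N_+, then the family {q_λ}_{λ∈Λ} is infsup-convex on X. -/
open Matrix
/-- A Z-matrix: a real symmetric matrix with nonpositive off-diagonal entries. -/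
def IsZMatrix {n : Type*} [DecidableEq n] (M : Matrix n n ℝ) : Prop :=
  M.IsSymm ∧ ∀ i j, i ≠ j → M i j ≤ 0

/-- A family `{q_λ}` of real-valued functions is infsup-convex on a subset `X`. -/
def InfSupConvexOn {Λ E : Type*} (X : Set E) (f : Λ → E → ℝ) : Prop :=
  ∀ m : ℕ, 0 < m → ∀ t : Fin m → ℝ, (∀ j, 0 ≤ t j) → (∑ j, t j) = 1 →
    ∀ x : Fin m → E, (∀ j, x j ∈ X) →
      ⨅ x' : X, ⨆ l, (f l x' : EReal) ≤ ⨆ l, ((∑ j, t j * f l (x j) : ℝ) : EReal)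

/-- Weighted Cauchy–Schwarz. -/
lemma weighted_cs {m : ℕ} (t a bb : Fin m → ℝ) (ht : ∀ j, 0 ≤ t j) :
    ∑ j, t j * (a j * bb j) ≤
      Real.sqrt (∑ j, t j * a j ^ 2) * Real.sqrt (∑ j, t j * bb j ^ 2) := by
  have h := Real.sum_mul_le_sqrt_mul_sqrt Finset.univ
    (fun j => Real.sqrt (t j) * a j) (fun j => Real.sqrt (t j) * bb j)
  have e1 : ∀ j : Fin m, (Real.sqrt (t j) * a j) * (Real.sqrt (t j) * bb j)
      = t j * (a j * bb j) := by
    intro j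
    have : Real.sqrt (t j) * Real.sqrt (t j) = t j := Real.mul_self_sqrt (ht j)
    ring_nf
    rw [Real.sq_sqrt (ht j)]; ring
  have e2 : ∀ j : Fin m, (Real.sqrt (t j) * a j) ^ 2 = t j * a j ^ 2 := by
    intro j; rw [mul_pow, Real.sq_sqrt (ht j)]
  have e3 : ∀ j : Fin m, (Real.sqrt (t j) * bb j) ^ 2 = t j * bb j ^ 2 := by
    intro j; rw [mul_pow, Real.sq_sqrt (ht j)]
  simp only [e1, e2, e3] at h
  exact h

/-- A family of quadratic functions whose extended block matrices are Z-matrices is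
infsup-convex on any `X ⊆ ℝ^N` containing the nonnegative orthant. -/
theorem stmt9 (N : ℕ) (hN : 1 ≤ N) (Λ : Type*) [Nonempty Λ]
    (A : Λ → Matrix (Fin N) (Fin N) ℝ) (b : Λ → Fin N → ℝ) (c : Λ → ℝ)
    (hZ : ∀ l, IsZMatrix (Matrix.fromBlocks (A l) (Matrix.replicateCol (Fin 1) (b l))
      (Matrix.replicateRow (Fin 1) (b l)) (Matrix.of fun _ _ => 2 * c l)))
    (q : Λ → (Fin N → ℝ) → ℝ)
    (hq : ∀ l x, q l x = (1 / 2) * (x ⬝ᵥ (A l).mulVec x) + b l ⬝ᵥ x + c l)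
    (X : Set (Fin N → ℝ)) (hX : ∀ x : Fin N → ℝ, (∀ k, 0 ≤ x k) → x ∈ X) :
    InfSupConvexOn X q := by
  intro m hm t ht ht1 x hx
  -- entrywise sign information from the Z-matrix hypothesis
  have hA : ∀ l, ∀ i k : Fin N, i ≠ k → A l i k ≤ 0 := by
    intro l i k hik
    have := (hZ l).2 (Sum.inl i) (Sum.inl k) (by simpa using hik)
    simpa using this
  have hb : ∀ l, ∀ k : Fin N, b l k ≤ 0 := by
    intro l k
    have := (hZ l).2 (Sum.inl k) (Sum.inr 0) (by simp)
    simpa [Matrix.fromBlocks, Matrix.replicateCol] using this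
  -- the comparison point
  set S : Fin N → ℝ := fun k => ∑ j, t j * (x j k) ^ 2 with hS
  have hSnn : ∀ k, 0 ≤ S k := fun k =>
    Finset.sum_nonneg fun j _ => mul_nonneg (ht j) (sq_nonneg _)
  set y : Fin N → ℝ := fun k => Real.sqrt (S k) with hy
  have hynn : ∀ k, 0 ≤ y k := fun k => Real.sqrt_nonneg _
  have hyX : y ∈ X := hX y hynn
  -- key pointwise inequalities
  have hCS : ∀ i k : Fin N, ∑ j, t j * (x j i * x j k) ≤ y i * y k := fun i k =>
    weighted_cs t (fun j => x j i) (fun j => x j k) ht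
  have hlin : ∀ k : Fin N, ∑ j, t j * x j k ≤ y k := by
    intro k
    have h := weighted_cs t (fun j => x j k) (fun _ => 1) ht
    simpa [ht1, hy, hS] using h
  -- the main inequality for each l
  have key : ∀ l, q l y ≤ ∑ j, t j * q l (x j) := by
    intro l
    have expand : ∑ j, t j * q l (x j)
        = (∑ i, ∑ k, (1 / 2) * A l i k * (∑ j, t j * (x j i * x j k)))
          + (∑ k, b l k * (∑ j, t j * x j k)) + c l := by
      simp only [hq, dotProduct, mulVec, mul_add, Finset.sum_add_distrib,
        Finset.mul_sum]
      congr 1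
      · congr 1
        · rw [Finset.sum_comm]
          refine Finset.sum_congr rfl fun i _ => ?_
          rw [Finset.sum_comm]
          refine Finset.sum_congr rfl fun k _ => ?_
          refine Finset.sum_congr rfl fun j _ => ?_
          ring
        · rw [Finset.sum_comm]
          refine Finset.sum_congr rfl fun k _ => ?_
          refine Finset.sum_congr rfl fun j _ => ?_
          ring
      · simp [← Finset.sum_mul, ht1]
    have expandy : q l y
        = (∑ i, ∑ k, (1 / 2) * A l i k * (y i * y k))
          + (∑ k, b l k * y k) + c l := by
      simp only [hq, dotProduct, mulVec, Finset.mul_sum]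
      congr 1
      congr 1
      refine Finset.sum_congr rfl fun i _ => ?_
      refine Finset.sum_congr rfl fun k _ => ?_
      ring
    rw [expand, expandy]
    gcongr ?_ + ?_ + _
    · refine Finset.sum_le_sum fun i _ => Finset.sum_le_sum fun k _ => ?_
      by_cases hik : i = k
      · subst hik
        have : y i * y i = ∑ j, t j * (x j i * x j i) := by
          have := Real.mul_self_sqrt (hSnn i)
          rw [hy]
          simp only [this, hS]
          rw [Real.mul_self_sqrt (Finset.sum_nonneg fun j _ => mul_nonneg (ht j) (sq_nonneg _))]
          refine Finset.sum_congr rfl fun j _ => by ring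
        rw [this]
      · have h1 : (1 / 2 : ℝ) * A l i k ≤ 0 := by
          have := hA l i k hik; linarith
        exact mul_le_mul_of_nonpos_left (hCS i k) h1
    · exact Finset.sum_le_sum fun k _ =>
        mul_le_mul_of_nonpos_left (hlin k) (hb l k)
  -- assemble via EReal
  calc ⨅ x' : X, ⨆ l, (q l x' : EReal) ≤ ⨆ l, (q l y : EReal) :=
        iInf_le _ (⟨y, hyX⟩ : X)
    _ ≤ ⨆ l, ((∑ j, t j * q l (x j) : ℝ) : EReal) :=
        iSup_mono fun l => by exact_mod_cast key l
end

section
/- Alternative for quadratic systems with Z-matrix data: Let N ≥ 1, X ⊆ ℝ^N with ℝ^N_+ ⊆ X, Λ nonempty, and for each λ ∈ Λ let A_λ ∈ 𝕊^N, b_λ ∈ ℝ^N, c_λ ∈ ℝ with [[A_λ, b_λ],[b_λ^T, 2c_λ]] a Z-matrix. Let q_λ(x) = (1/2)x^T A_λ x + b_λ^T x + c_λ and assume λ ↦ q_λ(x) is bounded for each x ∈ X. Then exactly one of: (a1) there exists x ∈ X with sup_{λ∈Λ} q_λ(x) < 0; (a2) there exists a positive linear functional L on ℓ^∞(Λ)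 with L(𝟏)=1 and inf_{x∈X} L({q_λ(x)}_{λ∈Λ}) ≥ 0. -/
open Matrix
open scoped ENNReal

lemma cs2 (a b c d : ℝ) :
    a*c + b*d ≤ Real.sqrt (a^2+b^2) * Real.sqrt (c^2+d^2) := by
  nlinarith [Real.sq_sqrt (show (0:ℝ) ≤ a^2+b^2 by positivity),
    Real.sq_sqrt (show (0:ℝ) ≤ c^2+d^2 by positivity),
    Real.sqrt_nonneg (a^2+b^2), Real.sqrt_nonneg (c^2+d^2), sq_nonneg (a*d - b*c),
    mul_nonneg (Real.sqrt_nonneg (a^2+b^2)) (Real.sqrt_nonneg (c^2+d^2))]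

lemma dq {N : ℕ} (M : Matrix (Fin N) (Fin N) ℝ) (u v : Fin N → ℝ) :
    u ⬝ᵥ M.mulVec v = ∑ i, ∑ j, M i j * (u i * v j) := by
  simp only [dotProduct, Matrix.mulVec, Finset.mul_sum]
  exact Finset.sum_congr rfl fun i _ => Finset.sum_congr rfl fun j _ => by ring

lemma quad_base {N : ℕ} (A : Matrix (Fin N) (Fin N) ℝ) (b : Fin N → ℝ) (c : ℝ)
    (hA : ∀ i j, i ≠ j → A i j ≤ 0) (hb : ∀ i, b i ≤ 0) (t : ℝ) (_ht : 0 ≤ t)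
    (x : Fin N → ℝ) :
    (1/2) * ((fun i => t * |x i|) ⬝ᵥ A.mulVec (fun i => t * |x i|))
      + t * (b ⬝ᵥ fun i => t * |x i|) + t^2 * c
    ≤ t^2 * ((1/2) * (x ⬝ᵥ A.mulVec x) + b ⬝ᵥ x + c) := by
  have hA' : ((fun i => t * |x i|) ⬝ᵥ A.mulVec (fun i => t * |x i|))
      ≤ t^2 * (x ⬝ᵥ A.mulVec x) := by
    rw [dq, dq, Finset.mul_sum]
    refine Finset.sum_le_sum fun i _ => ?_
    rw [Finset.mul_sum]
    refine Finset.sum_le_sum fun j _ => ?_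
    rcases eq_or_ne i j with rfl | hij
    · have : |x i| * |x i| = x i * x i := abs_mul_abs_self _
      exact le_of_eq (by linear_combination (A i i * t^2) * this)
    · have h1 : x i * x j ≤ |x i| * |x j| := by
        rw [← abs_mul]; exact le_abs_self _
      nlinarith [mul_nonneg (mul_nonneg (neg_nonneg.2 (hA i j hij)) (sq_nonneg t))
        (sub_nonneg.2 h1)]
  have hb' : t * (b ⬝ᵥ fun i => t * |x i|) ≤ t^2 * (b ⬝ᵥ x) := by
    simp only [dotProduct, Finset.mul_sum]
    refine Finset.sum_le_sum fun i _ => ?_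
    nlinarith [mul_nonneg (mul_nonneg (neg_nonneg.2 (hb i)) (sq_nonneg t))
      (sub_nonneg.2 (le_abs_self (x i)))]
  nlinarith [hA', hb']

lemma quad_step {N : ℕ} (A : Matrix (Fin N) (Fin N) ℝ) (b : Fin N → ℝ) (c : ℝ)
    (hA : ∀ i j, i ≠ j → A i j ≤ 0) (hb : ∀ i, b i ≤ 0)
    (z₁ z₂ : Fin N → ℝ) (τ₁ τ₂ : ℝ) :
    (1/2) * ((fun i => Real.sqrt (z₁ i^2 + z₂ i^2)) ⬝ᵥ
        A.mulVec (fun i => Real.sqrt (z₁ i^2 + z₂ i^2)))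
      + Real.sqrt (τ₁^2 + τ₂^2) * (b ⬝ᵥ fun i => Real.sqrt (z₁ i^2 + z₂ i^2))
      + (Real.sqrt (τ₁^2 + τ₂^2))^2 * c
    ≤ ((1/2) * (z₁ ⬝ᵥ A.mulVec z₁) + τ₁ * (b ⬝ᵥ z₁) + τ₁^2 * c)
      + ((1/2) * (z₂ ⬝ᵥ A.mulVec z₂) + τ₂ * (b ⬝ᵥ z₂) + τ₂^2 * c) := by
  set z : Fin N → ℝ := fun i => Real.sqrt (z₁ i^2 + z₂ i^2) with hz
  have hA' : (z ⬝ᵥ A.mulVec z) ≤ (z₁ ⬝ᵥ A.mulVec z₁) + (z₂ ⬝ᵥ A.mulVec z₂) := by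
    rw [dq, dq, dq, ← Finset.sum_add_distrib]
    refine Finset.sum_le_sum fun i _ => ?_
    rw [← Finset.sum_add_distrib]
    refine Finset.sum_le_sum fun j _ => ?_
    rcases eq_or_ne i j with rfl | hij
    · have : z i * z i = z₁ i^2 + z₂ i^2 :=
        Real.mul_self_sqrt (by positivity)
      exact le_of_eq (by linear_combination (A i i) * this)
    · have h1 : z₁ i * z₁ j + z₂ i * z₂ j ≤ z i * z j := cs2 _ _ _ _
      nlinarith [mul_nonpos_of_nonpos_of_nonneg (hA i j hij) (sub_nonneg.2 h1)]
  have hb' : Real.sqrt (τ₁^2 + τ₂^2) * (b ⬝ᵥ z) ≤ τ₁ * (b ⬝ᵥ z₁) + τ₂ * (b ⬝ᵥ z₂) := by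
    simp only [dotProduct, Finset.mul_sum, ← Finset.sum_add_distrib]
    refine Finset.sum_le_sum fun i _ => ?_
    have h1 : τ₁ * z₁ i + τ₂ * z₂ i ≤ Real.sqrt (τ₁^2 + τ₂^2) * z i := cs2 _ _ _ _
    nlinarith [mul_nonpos_of_nonpos_of_nonneg (hb i) (sub_nonneg.2 h1)]
  have hc' : (Real.sqrt (τ₁^2 + τ₂^2))^2 = τ₁^2 + τ₂^2 := Real.sq_sqrt (by positivity)
  rw [hc']; linarith [hA', hb']


set_option maxHeartbeats 2000000 in
/-- Alternative theorem for a (possibly infinite) system of quadratic inequalities with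
Z-matrix data: either the system `sup_λ q_λ(x) < 0` has a solution in `X`, or some
positive normalized linear functional `L` on `ℓ^∞(Λ)` gives `inf_{x∈X} L({q_λ(x)}) ≥ 0`,
but never both. -/
theorem stmt11 (N : ℕ) (hN : 1 ≤ N) (Λ : Type*) [Nonempty Λ]
    (X : Set (Fin N → ℝ)) (hX : ∀ x : Fin N → ℝ, (∀ k, 0 ≤ x k) → x ∈ X)
    (A : Λ → Matrix (Fin N) (Fin N) ℝ) (b : Λ → Fin N → ℝ) (c : Λ → ℝ)
    (hZ : ∀ l, IsZMatrix (Matrix.fromBlocks (A l) (Matrix.replicateCol (Fin 1) (b l))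
      (Matrix.replicateRow (Fin 1) (b l)) (Matrix.of fun _ _ => 2 * c l)))
    (q : Λ → (Fin N → ℝ) → ℝ)
    (hq : ∀ l x, q l x = (1 / 2) * (x ⬝ᵥ (A l).mulVec x) + b l ⬝ᵥ x + c l)
    (F : X → lp (fun _ : Λ => ℝ) ∞) (hF : ∀ (x : X) (l : Λ), F x l = q l x) :
    Xor'
      (∃ x ∈ X, (⨆ l, (q l x : EReal)) < 0)
      (∃ L : lp (fun _ : Λ => ℝ) ∞ →ₗ[ℝ] ℝ,
        (∀ Φ : lp (fun _ : Λ => ℝ) ∞, (∀ l, 0 ≤ Φ l) → 0 ≤ L Φ) ∧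
        L (lpinfOne Λ) = 1 ∧
        (0 : EReal) ≤ ⨅ x : X, (L (F x) : EReal)) := by
  classical
  -- Z-matrix consequences
  have hAoff : ∀ l (i j : Fin N), i ≠ j → A l i j ≤ 0 := by
    intro l i j h
    have := (hZ l).2 (Sum.inl i) (Sum.inl j) (fun hc => h (Sum.inl_injective hc))
    simpa using this
  have hboff : ∀ l (i : Fin N), b l i ≤ 0 := by
    intro l i
    have := (hZ l).2 (Sum.inl i) (Sum.inr 0) (by simp)
    simpa using this
  -- the "not both" direction
  have notB : (∃ x ∈ X, (⨆ l, (q l x : EReal)) < 0) →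
      ¬ (∃ L : lp (fun _ : Λ => ℝ) ∞ →ₗ[ℝ] ℝ,
        (∀ Φ : lp (fun _ : Λ => ℝ) ∞, (∀ l, 0 ≤ Φ l) → 0 ≤ L Φ) ∧
        L (lpinfOne Λ) = 1 ∧
        (0 : EReal) ≤ ⨅ x : X, (L (F x) : EReal)) := by
    rintro ⟨x, hx, hsup⟩ ⟨L, hpos, hone, hinf⟩
    obtain ⟨r, hr1, hr2⟩ := exists_between hsup
    have hbotle : ((q (Classical.arbitrary Λ) x : ℝ) : EReal) ≤ r :=
      le_of_lt (lt_of_le_of_lt (le_iSup (fun l => ((q l x : ℝ) : EReal)) _) hr1)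
    have hbot : r ≠ ⊥ := by
      intro h; rw [h] at hbotle; exact (EReal.coe_ne_bot _) (le_bot_iff.mp hbotle)
    have htop : r ≠ ⊤ := ne_top_of_lt hr2
    set ε : ℝ := r.toReal with hεdef
    have hre : (ε : EReal) = r := EReal.coe_toReal htop hbot
    have hεneg : ε < 0 := by
      have : (ε : EReal) < ((0:ℝ) : EReal) := by rw [hre]; exact_mod_cast hr2
      exact_mod_cast this
    have hub : ∀ l, q l x ≤ ε := by
      intro l
      have : ((q l x : ℝ) : EReal) ≤ (ε : EReal) := by
        rw [hre]; exact le_of_lt (lt_of_le_of_lt (le_iSup (fun l => ((q l x : ℝ) : EReal)) l) hr1)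
      exact_mod_cast this
    set x' : X := ⟨x, hx⟩ with hx'
    have hΦ : ∀ l, (0:ℝ) ≤ (ε • lpinfOne Λ - F x') l := by
      intro l
      have he : (ε • lpinfOne Λ - F x') l = ε - q l x := by
        have h1 : (ε • lpinfOne Λ - F x') l = ε * (lpinfOne Λ) l - F x' l := by rw [lp.coeFn_sub, lp.coeFn_smul]; rfl
        rw [h1, hF x' l, show (lpinfOne Λ) l = 1 from rfl]; ring
      rw [he]
      linarith [hub l]
    have h1 := hpos _ hΦ
    rw [map_sub, _root_.map_smul, hone, smul_eq_mul, mul_one] at h1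
    have h2 : (0:EReal) ≤ (L (F x') : EReal) := le_trans hinf (iInf_le _ x')
    have h2' : (0:ℝ) ≤ L (F x') := by exact_mod_cast h2
    linarith
  by_cases hA1 : (∃ x ∈ X, (⨆ l, (q l x : EReal)) < 0)
  · exact Or.inl ⟨hA1, notB hA1⟩
  refine Or.inr ⟨?_, hA1⟩
  push_neg at hA1
  -- near-optimality
  have hnear : ∀ x ∈ X, ∀ ε : ℝ, 0 < ε → ∃ l, -ε < q l x := by
    intro x hx ε hε
    have h0 : ((-ε : ℝ) : EReal) < ⨆ l, ((q l x : ℝ) : EReal) := by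
      refine lt_of_lt_of_le ?_ (hA1 x hx)
      exact_mod_cast (by linarith : -ε < (0:ℝ))
    obtain ⟨l, hl⟩ := lt_iSup_iff.mp h0
    exact ⟨l, by exact_mod_cast hl⟩
  have hbdd : ∀ Φ : lp (fun _ : Λ => ℝ) ∞, BddAbove (Set.range fun l => Φ l) := by
    intro Φ
    obtain ⟨Cb, hCb⟩ := memℓp_infty_iff.mp (lp.memℓp Φ)
    exact ⟨Cb, by rintro _ ⟨l, rfl⟩; exact (le_abs_self _).trans (by simpa using hCb ⟨l, rfl⟩)⟩
  set P : lp (fun _ : Λ => ℝ) ∞ → ℝ := fun Φ => ⨆ l, Φ l with hPdef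
  have hleP : ∀ (Φ : lp (fun _ : Λ => ℝ) ∞) (l : Λ), Φ l ≤ P Φ := fun Φ l => le_ciSup (hbdd Φ) l
  have hPle : ∀ (Φ : lp (fun _ : Λ => ℝ) ∞) (a : ℝ), (∀ l, Φ l ≤ a) → P Φ ≤ a := fun Φ a h => ciSup_le h
  have hPadd : ∀ Φ Ψ : lp (fun _ : Λ => ℝ) ∞, P (Φ + Ψ) ≤ P Φ + P Ψ := by
    intro Φ Ψ
    refine hPle _ _ fun l => ?_
    calc (Φ + Ψ) l = Φ l + Ψ l := by simp
    _ ≤ P Φ + P Ψ := add_le_add (hleP Φ l) (hleP Ψ l)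
  have hPsmul0 : ∀ (t : ℝ), 0 < t → ∀ Φ : lp (fun _ : Λ => ℝ) ∞, P (t • Φ) ≤ t * P Φ := by
    intro t ht Φ
    refine hPle _ _ fun l => ?_
    calc (t • Φ) l = t * Φ l := by simp
    _ ≤ t * P Φ := mul_le_mul_of_nonneg_left (hleP Φ l) ht.le
  have hPsmul : ∀ (t : ℝ), 0 < t → ∀ Φ : lp (fun _ : Λ => ℝ) ∞, P (t • Φ) = t * P Φ := by
    intro t ht Φ
    refine le_antisymm (hPsmul0 t ht Φ) ?_
    have h := hPsmul0 t⁻¹ (by positivity) (t • Φ)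
    rw [smul_smul, inv_mul_cancel₀ ht.ne', one_smul] at h
    have := mul_le_mul_of_nonneg_left h ht.le
    rw [← mul_assoc, mul_inv_cancel₀ ht.ne', one_mul] at this
    linarith
  have hP0 : P (0 : lp (fun _ : Λ => ℝ) ∞) = 0 := by
    have h : (fun l : Λ => (0 : lp (fun _ : Λ => ℝ) ∞) l) = fun _ => (0:ℝ) := by funext l; simp
    rw [hPdef]; simp only [h]; exact ciSup_const
  have hPone : P (lpinfOne Λ) = 1 := by
    have h : (fun l : Λ => (lpinfOne Λ) l) = fun _ => (1:ℝ) := rfl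
    rw [hPdef]; simp only [h]; exact ciSup_const
  have hPnegone : P (-(lpinfOne Λ)) = -1 := by
    have h : (fun l : Λ => (-(lpinfOne Λ)) l) = fun _ => (-1:ℝ) := by
      funext l
      have : (-(lpinfOne Λ)) l = -((lpinfOne Λ) l) := by simp
      rw [this]; rfl
    rw [hPdef]; simp only [h]; exact ciSup_const
    -- the cone of finite nonnegative combinations of the F x
  set C : AddSubmonoid (lp (fun _ : Λ => ℝ) ∞) :=
    AddSubmonoid.closure {Ψ | ∃ s : ℝ, ∃ x : X, 0 ≤ s ∧ Ψ = s • F x} with hCdef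
  have hFmem : ∀ x : X, F x ∈ C :=
    fun x => AddSubmonoid.subset_closure ⟨1, x, zero_le_one, (one_smul ℝ (F x)).symm⟩
  have hCsmul : ∀ (t : ℝ), 0 ≤ t → ∀ Ψ ∈ C, t • Ψ ∈ C := by
    intro t ht Ψ hΨ
    induction hΨ using AddSubmonoid.closure_induction with
    | mem Ψ h =>
      obtain ⟨s, x, hs, rfl⟩ := h
      rw [smul_smul]
      exact AddSubmonoid.subset_closure ⟨t*s, x, mul_nonneg ht hs, rfl⟩
    | zero => rw [smul_zero]; exact C.zero_mem
    | add Ψ₁ Ψ₂ h₁ h₂ ih₁ ih₂ => rw [smul_add]; exact C.add_mem ih₁ ih₂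
  -- the key structural invariant
  have hG : ∀ Ψ ∈ C, ∃ (z : Fin N → ℝ) (τ : ℝ), 0 ≤ τ ∧ (∀ i, 0 ≤ z i) ∧
      (τ = 0 → ∀ i, z i = 0) ∧
      ∀ l, (1/2) * (z ⬝ᵥ (A l).mulVec z) + τ * (b l ⬝ᵥ z) + τ^2 * c l ≤ Ψ l := by
    intro Ψ hΨ
    induction hΨ using AddSubmonoid.closure_induction with
    | mem Ψ h =>
      obtain ⟨s, x, hs, rfl⟩ := h
      refine ⟨fun i => Real.sqrt s * |(x : Fin N → ℝ) i|, Real.sqrt s, Real.sqrt_nonneg s,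
        fun i => by positivity, fun h i => by simp [h], fun l => ?_⟩
      have hbase := quad_base (A l) (b l) (c l) (hAoff l) (hboff l)
        (Real.sqrt s) (Real.sqrt_nonneg s) (x : Fin N → ℝ)
      have hsq : (Real.sqrt s)^2 = s := Real.sq_sqrt hs
      have hentry : (s • F x) l = s * q l (x : Fin N → ℝ) := by
        have : (s • F x) l = s * (F x) l := by simp
        rw [this, hF]
      rw [hentry, hq]
      rw [hsq] at hbase
      rw [hsq]
      exact hbase
    | zero =>
      refine ⟨fun _ => 0, 0, le_refl _, fun i => le_refl _, fun _ i => rfl, fun l => ?_⟩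
      have h0 : (fun _ : Fin N => (0:ℝ)) = (0 : Fin N → ℝ) := rfl
      rw [h0]
      simp
    | add Ψ₁ Ψ₂ h₁ h₂ ih₁ ih₂ =>
      obtain ⟨z₁, τ₁, hτ₁, hz₁, hτz₁, hR₁⟩ := ih₁
      obtain ⟨z₂, τ₂, hτ₂, hz₂, hτz₂, hR₂⟩ := ih₂
      refine ⟨fun i => Real.sqrt (z₁ i^2 + z₂ i^2), Real.sqrt (τ₁^2 + τ₂^2),
        Real.sqrt_nonneg _, fun i => Real.sqrt_nonneg _, ?_, fun l => ?_⟩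
      · intro h i
        show Real.sqrt (z₁ i^2 + z₂ i^2) = 0
        have h00 : τ₁^2 + τ₂^2 = 0 := by
          have := Real.sq_sqrt (by positivity : (0:ℝ) ≤ τ₁^2 + τ₂^2)
          rw [h] at this; simpa using this.symm
        have ht1 : τ₁ = 0 := by nlinarith [sq_nonneg τ₁, sq_nonneg τ₂]
        have ht2 : τ₂ = 0 := by nlinarith [sq_nonneg τ₁, sq_nonneg τ₂]
        rw [hτz₁ ht1 i, hτz₂ ht2 i]
        simp
      · have hstep := quad_step (A l) (b l) (c l) (hAoff l) (hboff l) z₁ z₂ τ₁ τ₂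
        have hsum : (Ψ₁ + Ψ₂) l = Ψ₁ l + Ψ₂ l := by simp
        rw [hsum]
        exact le_trans hstep (add_le_add (hR₁ l) (hR₂ l))
  -- nonnegativity of P on C
  have hPC : ∀ Ψ ∈ C, 0 ≤ P Ψ := by
    intro Ψ hΨ
    obtain ⟨z, τ, hτ, hzpos, hτz, hR⟩ := hG Ψ hΨ
    by_cases h0 : τ = 0
    · have hz0 : z = (0 : Fin N → ℝ) := funext (hτz h0)
      have := hR (Classical.arbitrary Λ)
      rw [hz0, h0] at this
      simp only [zero_dotProduct] at this
      refine le_trans ?_ (hleP Ψ (Classical.arbitrary Λ))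
      calc (0:ℝ) = 1/2 * ((0 : Fin N → ℝ) ⬝ᵥ (A (Classical.arbitrary Λ)).mulVec 0)
          + 0 * (b (Classical.arbitrary Λ) ⬝ᵥ (0 : Fin N → ℝ))
          + 0^2 * c (Classical.arbitrary Λ) := by simp
      _ ≤ Ψ (Classical.arbitrary Λ) := hR (Classical.arbitrary Λ) |>.trans_eq' (by rw [hz0, h0])
    · have hτpos : 0 < τ := lt_of_le_of_ne hτ (Ne.symm h0)
      set w : Fin N → ℝ := fun i => τ⁻¹ * z i with hwdef
      have hw : w ∈ X := hX w fun i => by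
        have := hzpos i
        positivity
      have hzw : z = τ • w := by
        funext i
        simp only [hwdef, Pi.smul_apply, smul_eq_mul]
        field_simp
      have hRw : ∀ l, (1/2) * (z ⬝ᵥ (A l).mulVec z) + τ * (b l ⬝ᵥ z) + τ^2 * c l
          = τ^2 * q l w := by
        intro l
        rw [hq, hzw]
        simp only [Matrix.mulVec_smul, smul_dotProduct, dotProduct_smul,
          smul_eq_mul]
        ring
      by_contra hneg
      push_neg at hneg
      obtain ⟨l, hl⟩ := hnear w hw ((-P Ψ)/τ^2) (div_pos (by linarith) (by positivity))
      have h1 : τ^2 * q l w ≤ Ψ l := (hRw l) ▸ (hR l)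
      have h2 : Ψ l ≤ P Ψ := hleP Ψ l
      have h3 : τ^2 * (-((-P Ψ)/τ^2)) < τ^2 * q l w :=
        mul_lt_mul_of_pos_left hl (by positivity)
      have h4 : τ^2 * (-((-P Ψ)/τ^2)) = P Ψ := by field_simp
      linarith
  -- the inf-convolution sublinear functional ρ
  set Sset : lp (fun _ : Λ => ℝ) ∞ → Set ℝ :=
    fun Φ => (fun Ψ => P (Φ + Ψ)) '' (C : Set (lp (fun _ : Λ => ℝ) ∞)) with hSdef
  have hSne : ∀ Φ, (Sset Φ).Nonempty := fun Φ => ⟨P (Φ + 0), ⟨0, C.zero_mem, rfl⟩⟩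
  have hSbd : ∀ Φ, BddBelow (Sset Φ) := by
    intro Φ
    refine ⟨-P (-Φ), ?_⟩
    rintro _ ⟨Ψ, hΨ, rfl⟩
    have e : (Φ + Ψ) + (-Φ) = Ψ := by abel
    have h := hPadd (Φ + Ψ) (-Φ)
    rw [e] at h
    linarith [hPC Ψ hΨ]
  set ρ : lp (fun _ : Λ => ℝ) ∞ → ℝ := fun Φ => sInf (Sset Φ) with hρdef
  have hρle : ∀ (Φ Ψ : lp (fun _ : Λ => ℝ) ∞), Ψ ∈ C → ρ Φ ≤ P (Φ + Ψ) :=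
    fun Φ Ψ h => csInf_le (hSbd Φ) ⟨Ψ, h, rfl⟩
  have hleρ : ∀ (a : ℝ) (Φ : lp (fun _ : Λ => ℝ) ∞),
      (∀ Ψ ∈ C, a ≤ P (Φ + Ψ)) → a ≤ ρ Φ := by
    intro a Φ h
    exact le_csInf (hSne Φ) (by rintro _ ⟨Ψ, hΨ, rfl⟩; exact h Ψ hΨ)
  have hρP : ∀ Φ, ρ Φ ≤ P Φ := by
    intro Φ
    have := hρle Φ 0 C.zero_mem
    rwa [add_zero] at this
  have hρ0 : 0 ≤ ρ (0 : lp (fun _ : Λ => ℝ) ∞) := by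
    refine hleρ 0 0 fun Ψ hΨ => ?_
    rw [zero_add]
    exact hPC Ψ hΨ
  have hρadd : ∀ Φ₁ Φ₂, ρ (Φ₁ + Φ₂) ≤ ρ Φ₁ + ρ Φ₂ := by
    intro Φ₁ Φ₂
    have step1 : ∀ Ψ₁ ∈ C, ∀ Ψ₂ ∈ C, ρ (Φ₁ + Φ₂) ≤ P (Φ₁ + Ψ₁) + P (Φ₂ + Ψ₂) := by
      intro Ψ₁ h₁ Ψ₂ h₂
      have h := hρle (Φ₁ + Φ₂) (Ψ₁ + Ψ₂) (C.add_mem h₁ h₂)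
      have e : (Φ₁ + Φ₂) + (Ψ₁ + Ψ₂) = (Φ₁ + Ψ₁) + (Φ₂ + Ψ₂) := by abel
      rw [e] at h
      exact le_trans h (hPadd _ _)
    have step2 : ∀ Ψ₂ ∈ C, ρ (Φ₁ + Φ₂) - P (Φ₂ + Ψ₂) ≤ ρ Φ₁ := by
      intro Ψ₂ h₂
      refine hleρ _ _ fun Ψ₁ h₁ => ?_
      linarith [step1 Ψ₁ h₁ Ψ₂ h₂]
    have step3 : ∀ Ψ₂ ∈ C, ρ (Φ₁ + Φ₂) - ρ Φ₁ ≤ P (Φ₂ + Ψ₂) :=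
      fun Ψ₂ h₂ => by linarith [step2 Ψ₂ h₂]
    have := hleρ (ρ (Φ₁ + Φ₂) - ρ Φ₁) Φ₂ step3
    linarith
  have hρsmul : ∀ (t : ℝ), 0 < t → ∀ Φ, ρ (t • Φ) = t * ρ Φ := by
    intro t ht Φ
    apply le_antisymm
    · have h1 : ρ (t • Φ) / t ≤ ρ Φ := by
        refine hleρ _ _ fun Ψ hΨ => ?_
        have h2 : ρ (t • Φ) ≤ P (t • Φ + t • Ψ) := hρle _ _ (hCsmul t ht.le Ψ hΨ)
        have h3 : t • Φ + t • Ψ = t • (Φ + Ψ) := (smul_add t Φ Ψ).symm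
        rw [h3, hPsmul t ht] at h2
        rw [div_le_iff₀ ht]
        linarith
      rw [div_le_iff₀ ht] at h1
      linarith
    · refine hleρ _ _ fun Ψ hΨ => ?_
      have h2 : ρ Φ ≤ P (Φ + t⁻¹ • Ψ) := hρle _ _ (hCsmul t⁻¹ (by positivity) Ψ hΨ)
      have h3 : t • (Φ + t⁻¹ • Ψ) = t • Φ + Ψ := by
        rw [smul_add, smul_smul, mul_inv_cancel₀ ht.ne', one_smul]
      have h4 := hPsmul t ht (Φ + t⁻¹ • Ψ)
      rw [h3] at h4
      nlinarith [mul_le_mul_of_nonneg_left h2 ht.le]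
  -- Hahn-Banach extension from the trivial subspace
  obtain ⟨g, -, hg⟩ := exists_extension_of_le_sublinear
    (LinearMap.toPMap (0 : lp (fun _ : Λ => ℝ) ∞ →ₗ[ℝ] ℝ) ⊥) ρ hρsmul hρadd
    (by
      rintro ⟨y, hy⟩
      rcases (Submodule.mem_bot ℝ).mp hy with rfl
      simpa using hρ0)
  refine ⟨g, ?_, ?_, ?_⟩
  · -- positivity
    intro Φ hΦ
    have h1 : g (-Φ) ≤ ρ (-Φ) := hg _
    have h2 : ρ (-Φ) ≤ P (-Φ) := hρP _
    have h3 : P (-Φ) ≤ 0 := hPle _ _ fun l => by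
      have : (-Φ) l = -(Φ l) := by simp
      rw [this]; linarith [hΦ l]
    rw [map_neg] at h1
    linarith
  · -- normalization
    have h1 : g (lpinfOne Λ) ≤ 1 := le_trans (le_trans (hg _) (hρP _)) (le_of_eq hPone)
    have h2 : g (-(lpinfOne Λ)) ≤ -1 :=
      le_trans (le_trans (hg _) (hρP _)) (le_of_eq hPnegone)
    rw [map_neg] at h2
    linarith
  · -- the infimum condition
    refine le_iInf fun x => ?_
    have h1 : g (-(F x)) ≤ ρ (-(F x)) := hg _
    have h2 : ρ (-(F x)) ≤ P (-(F x) + F x) := hρle _ _ (hFmem x)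
    rw [neg_add_cancel, hP0] at h2
    rw [map_neg] at h1
    have h3 : (0:ℝ) ≤ g (F x) := by linarith
    exact_mod_cast h3
end

section
/- Fritz John conditions for an infinite quadratic program: With the setting of Z-matrix quadratic data q, {q_λ}_{λ∈Λ} on X ⊇ ℝ^N_+ (each associated extended matrix being a Z-matrix), assume the feasible set X_0 = {x ∈ X : sup_{λ∈Λ} q_λ(x) ≤ 0} is nonempty, λ ↦ q_λ(x) is bounded for each x ∈ X, and x⁰ ∈ X is an optimal solution of the program inf_{x∈X_0} q(x). Then there exist y ≥ 0 and a positive continuous linear functional L on ℓ^∞(Λ) with y + L(𝟏) ≠ 0 such that the function x ↦ y·q(x) + L({q_λ(x)}_{λ∈Λ}) attains its infimum over X at x⁰, and L({q_λ(x⁰)}_{λ∈Λ}) = 0. -/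
open Matrix
open scoped ENNReal

private lemma sqrt_pair_ineq {t a b c d : ℝ} (ht0 : 0 ≤ t) (ht1 : t ≤ 1)
    (ha : 0 ≤ a) (hb : 0 ≤ b) (hc : 0 ≤ c) (hd : 0 ≤ d) :
    t * (a * c) + (1 - t) * (b * d) ≤
      Real.sqrt (t * a ^ 2 + (1 - t) * b ^ 2) * Real.sqrt (t * c ^ 2 + (1 - t) * d ^ 2) := by
  have h1 : (0:ℝ) ≤ t * a ^ 2 + (1 - t) * b ^ 2 := by nlinarith [sq_nonneg a, sq_nonneg b]
  have h2 : (0:ℝ) ≤ t * c ^ 2 + (1 - t) * d ^ 2 := by nlinarith [sq_nonneg c, sq_nonneg d]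
  have hL : (0:ℝ) ≤ t * (a * c) + (1 - t) * (b * d) := by
    nlinarith [mul_nonneg ha hc, mul_nonneg hb hd]
  rw [← Real.sqrt_mul h1]
  rw [Real.le_sqrt hL (by nlinarith [mul_nonneg h1 h2])]
  nlinarith [mul_nonneg (mul_nonneg ht0 (by linarith : (0:ℝ) ≤ 1 - t)) (sq_nonneg (a*d - b*c))]

private lemma quadSum {N : ℕ} (M : Matrix (Fin N) (Fin N) ℝ) (v : Fin N → ℝ) (c : ℝ)
    (x y w : Fin N → ℝ) (t : ℝ)
    (hff : ∀ i j, M i j * (w i * w j) ≤ M i j * (t * (x i * x j) + (1 - t) * (y i * y j)))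
    (hlin : ∀ i, v i * w i ≤ v i * (t * x i + (1 - t) * y i)) :
    (1/2) * (w ⬝ᵥ M.mulVec w) + v ⬝ᵥ w + c ≤
      t * ((1/2) * (x ⬝ᵥ M.mulVec x) + v ⬝ᵥ x + c) +
        (1 - t) * ((1/2) * (y ⬝ᵥ M.mulVec y) + v ⬝ᵥ y + c) := by
  have h1 : w ⬝ᵥ M.mulVec w ≤ t * (x ⬝ᵥ M.mulVec x) + (1 - t) * (y ⬝ᵥ M.mulVec y) := by
    simp only [dotProduct, Matrix.mulVec, Finset.mul_sum]
    rw [← Finset.sum_add_distrib]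
    refine Finset.sum_le_sum fun i _ => ?_
    rw [← Finset.sum_add_distrib]
    refine Finset.sum_le_sum fun j _ => ?_
    have := hff i j
    nlinarith [this]
  have h2 : v ⬝ᵥ w ≤ t * (v ⬝ᵥ x) + (1 - t) * (v ⬝ᵥ y) := by
    simp only [dotProduct, Finset.mul_sum]
    rw [← Finset.sum_add_distrib]
    refine Finset.sum_le_sum fun i _ => ?_
    have := hlin i
    nlinarith [this]
  nlinarith [h1, h2]

private lemma quadConvLe {N : ℕ} (M : Matrix (Fin N) (Fin N) ℝ) (v : Fin N → ℝ) (c : ℝ)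
    (hM : ∀ i j, i ≠ j → M i j ≤ 0) (hv : ∀ i, v i ≤ 0)
    (x y : Fin N → ℝ) (hx : ∀ i, 0 ≤ x i) (hy : ∀ i, 0 ≤ y i)
    (t : ℝ) (ht0 : 0 ≤ t) (ht1 : t ≤ 1) :
    (1/2) * ((fun i => Real.sqrt (t * (x i)^2 + (1 - t) * (y i)^2)) ⬝ᵥ
        M.mulVec (fun i => Real.sqrt (t * (x i)^2 + (1 - t) * (y i)^2))) +
      v ⬝ᵥ (fun i => Real.sqrt (t * (x i)^2 + (1 - t) * (y i)^2)) + c ≤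
      t * ((1/2) * (x ⬝ᵥ M.mulVec x) + v ⬝ᵥ x + c) +
        (1 - t) * ((1/2) * (y ⬝ᵥ M.mulVec y) + v ⬝ᵥ y + c) := by
  have ht1' : (0:ℝ) ≤ 1 - t := by linarith
  have hnn : ∀ i, (0:ℝ) ≤ t * (x i)^2 + (1 - t) * (y i)^2 := fun i => by
    nlinarith [sq_nonneg (x i), sq_nonneg (y i)]
  refine quadSum M v c x y _ t (fun i j => ?_) (fun i => ?_)
  · by_cases hij : i = j
    · subst hij
      have hsq : Real.sqrt (t * (x i)^2 + (1 - t) * (y i)^2) *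
          Real.sqrt (t * (x i)^2 + (1 - t) * (y i)^2) = t * (x i)^2 + (1 - t) * (y i)^2 :=
        Real.mul_self_sqrt (hnn i)
      apply le_of_eq
      rw [hsq]; ring
    · have hk := sqrt_pair_ineq ht0 ht1 (hx i) (hy i) (hx j) (hy j)
      have hm := hM i j hij
      nlinarith [mul_nonneg (neg_nonneg.mpr hm) (sub_nonneg.mpr hk)]
  · have hk : t * x i + (1 - t) * y i ≤ Real.sqrt (t * (x i)^2 + (1 - t) * (y i)^2) := by
      rw [Real.le_sqrt (by nlinarith [mul_nonneg ht0 (hx i), mul_nonneg ht1' (hy i)]) (hnn i)]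
      nlinarith [mul_nonneg (mul_nonneg ht0 ht1') (sq_nonneg (x i - y i))]
    have hm := hv i
    nlinarith [mul_nonneg (neg_nonneg.mpr hm) (sub_nonneg.mpr hk)]

private lemma quadAbsLe {N : ℕ} (M : Matrix (Fin N) (Fin N) ℝ) (v : Fin N → ℝ) (c : ℝ)
    (hM : ∀ i j, i ≠ j → M i j ≤ 0) (hv : ∀ i, v i ≤ 0) (x : Fin N → ℝ) :
    (1/2) * ((fun i => |x i|) ⬝ᵥ M.mulVec (fun i => |x i|)) + v ⬝ᵥ (fun i => |x i|) + c ≤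
      (1/2) * (x ⬝ᵥ M.mulVec x) + v ⬝ᵥ x + c := by
  have h := quadSum M v c x x (fun i => |x i|) 1 (fun i j => ?_) (fun i => ?_)
  · linarith [h]
  · by_cases hij : i = j
    · subst hij
      apply le_of_eq
      rw [abs_mul_abs_self]; ring
    · have hm := hM i j hij
      have hk : x i * x j ≤ |x i| * |x j| := by
        rw [← abs_mul]; exact le_abs_self _
      nlinarith [mul_nonneg (neg_nonneg.mpr hm) (sub_nonneg.mpr hk)]
  · have hm := hv i
    have hk : x i ≤ |x i| := le_abs_self _
    nlinarith [mul_nonneg (neg_nonneg.mpr hm) (sub_nonneg.mpr hk)]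

section ZQaux

private lemma zmatrix_offdiag {N : ℕ} {A : Matrix (Fin N) (Fin N) ℝ} {b : Fin N → ℝ} {c : ℝ}
    (hZ : IsZMatrix (Matrix.fromBlocks A (Matrix.replicateCol (Fin 1) b)
      (Matrix.replicateRow (Fin 1) b) (Matrix.of fun _ _ => 2 * c))) :
    (∀ i j, i ≠ j → A i j ≤ 0) ∧ (∀ i, b i ≤ 0) := by
  constructor
  · intro i j hij
    have := hZ.2 (Sum.inl i) (Sum.inl j) (by simpa using hij)
    simpa using this
  · intro i
    have := hZ.2 (Sum.inl i) (Sum.inr 0) (by simp)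
    simpa using this

end ZQaux

set_option maxHeartbeats 2000000 in
/-- Fritz John conditions for the (possibly infinite) quadratic program
`inf { q(x) : x ∈ X, sup_λ q_λ(x) ≤ 0 }` with Z-matrix data. -/
theorem stmt12 (N : ℕ) (hN : 1 ≤ N) (Λ : Type*) [Nonempty Λ]
    (X : Set (Fin N → ℝ)) (hX : ∀ x : Fin N → ℝ, (∀ k, 0 ≤ x k) → x ∈ X)
    -- the objective quadratic function
    (A : Matrix (Fin N) (Fin N) ℝ) (b : Fin N → ℝ) (c : ℝ)
    (hZ : IsZMatrix (Matrix.fromBlocks A (Matrix.replicateCol (Fin 1) b)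
      (Matrix.replicateRow (Fin 1) b) (Matrix.of fun _ _ => 2 * c)))
    (q : (Fin N → ℝ) → ℝ)
    (hq : ∀ x, q x = (1 / 2) * (x ⬝ᵥ A.mulVec x) + b ⬝ᵥ x + c)
    -- the constraint quadratic functions
    (A' : Λ → Matrix (Fin N) (Fin N) ℝ) (b' : Λ → Fin N → ℝ) (c' : Λ → ℝ)
    (hZ' : ∀ l, IsZMatrix (Matrix.fromBlocks (A' l) (Matrix.replicateCol (Fin 1) (b' l))
      (Matrix.replicateRow (Fin 1) (b' l)) (Matrix.of fun _ _ => 2 * c' l)))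
    (q' : Λ → (Fin N → ℝ) → ℝ)
    (hq' : ∀ l x, q' l x = (1 / 2) * (x ⬝ᵥ (A' l).mulVec x) + b' l ⬝ᵥ x + c' l)
    -- boundedness in λ of the constraint values, encoded by `F`
    (F : (Fin N → ℝ) → lp (fun _ : Λ => ℝ) ∞)
    (hF : ∀ x ∈ X, ∀ l : Λ, F x l = q' l x)
    -- feasible set, nonemptiness, optimal solution
    (X₀ : Set (Fin N → ℝ)) (hX₀ : X₀ = {x ∈ X | (⨆ l, (q' l x : EReal)) ≤ 0})
    (hne : X₀.Nonempty)
    (x₀ : Fin N → ℝ) (hx₀ : x₀ ∈ X₀) (hopt : ∀ x ∈ X₀, q x₀ ≤ q x) :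
    ∃ (y : ℝ) (L : lp (fun _ : Λ => ℝ) ∞ →L[ℝ] ℝ),
      0 ≤ y ∧
      (∀ Φ : lp (fun _ : Λ => ℝ) ∞, (∀ l, 0 ≤ Φ l) → 0 ≤ L Φ) ∧
      y + L (lpinfOne Λ) ≠ 0 ∧
      (∀ x ∈ X, y * q x₀ + L (F x₀) ≤ y * q x + L (F x)) ∧
      L (F x₀) = 0 := by
  classical
  obtain ⟨hA, hb⟩ := zmatrix_offdiag hZ
  have hA' : ∀ l, ∀ i j, i ≠ j → A' l i j ≤ 0 := fun l => (zmatrix_offdiag (hZ' l)).1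
  have hb' : ∀ l i, b' l i ≤ 0 := fun l => (zmatrix_offdiag (hZ' l)).2
  -- abs reduction facts
  have habsq : ∀ x : Fin N → ℝ, q (fun i => |x i|) ≤ q x := by
    intro x; rw [hq, hq]; exact quadAbsLe A b c hA hb x
  have habsq' : ∀ (l : Λ) (x : Fin N → ℝ), q' l (fun i => |x i|) ≤ q' l x := by
    intro l x; rw [hq', hq']; exact quadAbsLe (A' l) (b' l) (c' l) (hA' l) (hb' l) x
  -- feasibility facts at x₀
  have hx₀' := hx₀
  rw [hX₀] at hx₀'
  have hx₀X : x₀ ∈ X := hx₀'.1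
  have hq'x₀ : ∀ l, q' l x₀ ≤ 0 := by
    intro l
    have h := le_trans (le_iSup (fun l => ((q' l x₀ : ℝ) : EReal)) l) hx₀'.2
    exact_mod_cast h
  -- the abs of the optimal point
  set a₀ : Fin N → ℝ := fun i => |x₀ i| with ha₀def
  have ha₀nn : ∀ i, 0 ≤ a₀ i := fun i => abs_nonneg _
  have ha₀X : a₀ ∈ X := hX _ ha₀nn
  have hqa₀ : q a₀ ≤ q x₀ := habsq x₀
  have hq'a₀ : ∀ l, q' l a₀ ≤ q' l x₀ := fun l => habsq' l x₀
  have hFa₀ : ∀ l, F a₀ l = q' l a₀ := hF a₀ ha₀X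
  have hFx₀ : ∀ l, F x₀ l = q' l x₀ := hF x₀ hx₀X
  -- the two convex sets
  set D : Set (ℝ × lp (fun _ : Λ => ℝ) ∞) :=
    {p | ∃ x : Fin N → ℝ, (∀ i, 0 ≤ x i) ∧ q x - q x₀ ≤ p.1 ∧ ∀ l, q' l x ≤ p.2 l} with hDdef
  set s : Set (ℝ × lp (fun _ : Λ => ℝ) ∞) :=
    {p | p.1 < 0 ∧ ‖p.2 + lpinfOne Λ‖ < 1} with hsdef
  have hsopen : IsOpen s := by
    have h1 : IsOpen {p : ℝ × lp (fun _ : Λ => ℝ) ∞ | p.1 < 0} :=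
      isOpen_lt continuous_fst continuous_const
    have h2 : IsOpen {p : ℝ × lp (fun _ : Λ => ℝ) ∞ | ‖p.2 + lpinfOne Λ‖ < 1} :=
      isOpen_lt (continuous_snd.add continuous_const).norm continuous_const
    exact h1.inter h2
  have hsconv : Convex ℝ s := by
    rintro p ⟨hp1, hp2⟩ r ⟨hr1, hr2⟩ a e ha he hae
    have he' : e = 1 - a := by linarith
    subst he'
    constructor
    · show (a • p + (1 - a) • r).1 < 0
      simp only [Prod.fst_add, Prod.smul_fst, smul_eq_mul]
      rcases eq_or_lt_of_le ha with h | h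
      · rw [← h]; simpa using hr1
      · have f1 : a * p.1 < 0 := mul_neg_of_pos_of_neg h hp1
        have f2 : (1 - a) * r.1 ≤ 0 :=
          mul_nonpos_of_nonneg_of_nonpos (by linarith) hr1.le
        linarith
    · show ‖(a • p + (1 - a) • r).2 + lpinfOne Λ‖ < 1
      have hsplit : (a • p + (1 - a) • r).2 + lpinfOne Λ =
          a • (p.2 + lpinfOne Λ) + (1 - a) • (r.2 + lpinfOne Λ) := by
        simp only [Prod.snd_add, Prod.smul_snd, smul_add]
        have h1 : a • (lpinfOne Λ) + (1 - a) • (lpinfOne Λ) = lpinfOne Λ := by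
          rw [← add_smul]; norm_num
        module
      rw [hsplit]
      have hn : ‖a • (p.2 + lpinfOne Λ) + (1 - a) • (r.2 + lpinfOne Λ)‖ ≤
          a * ‖p.2 + lpinfOne Λ‖ + (1 - a) * ‖r.2 + lpinfOne Λ‖ := by
        refine (norm_add_le _ _).trans ?_
        rw [norm_smul, norm_smul, Real.norm_eq_abs, Real.norm_eq_abs,
          abs_of_nonneg ha, abs_of_nonneg he]
      rcases eq_or_lt_of_le ha with h | h
      · rw [← h]
        simp only [zero_smul, zero_add, sub_zero, one_smul]
        exact hr2
      · have f1 : a * ‖p.2 + lpinfOne Λ‖ < a := by nlinarith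
        have f2 : (1 - a) * ‖r.2 + lpinfOne Λ‖ ≤ 1 - a := by
          have := mul_le_mul_of_nonneg_left hr2.le (by linarith : (0:ℝ) ≤ 1 - a)
          linarith
        linarith [hn]
  have hDconv : Convex ℝ D := by
    rintro p ⟨xp, hxp, hp1, hp2⟩ r ⟨xr, hxr, hr1, hr2⟩ a e ha he hae
    have he' : e = 1 - a := by linarith
    subst he'
    refine ⟨fun i => Real.sqrt (a * (xp i)^2 + (1 - a) * (xr i)^2),
      fun i => Real.sqrt_nonneg _, ?_, ?_⟩
    · have hqc : q (fun i => Real.sqrt (a * (xp i)^2 + (1 - a) * (xr i)^2)) ≤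
          a * q xp + (1 - a) * q xr := by
        rw [hq, hq, hq]
        exact quadConvLe A b c hA hb xp xr hxp hxr a ha (by linarith)
      show q _ - q x₀ ≤ (a • p + (1 - a) • r).1
      simp only [Prod.fst_add, Prod.smul_fst, smul_eq_mul]
      nlinarith [mul_le_mul_of_nonneg_left hp1 ha,
        mul_le_mul_of_nonneg_left hr1 (by linarith : (0:ℝ) ≤ 1 - a)]
    · intro l
      have hqc : q' l (fun i => Real.sqrt (a * (xp i)^2 + (1 - a) * (xr i)^2)) ≤
          a * q' l xp + (1 - a) * q' l xr := by
        rw [hq', hq', hq']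
        exact quadConvLe (A' l) (b' l) (c' l) (hA' l) (hb' l) xp xr hxp hxr a ha (by linarith)
      show q' l _ ≤ (a • p + (1 - a) • r).2 l
      have happ : ((a • p + (1 - a) • r).2 : Λ → ℝ) l = a * p.2 l + (1 - a) * r.2 l := by
        simp only [Prod.snd_add, Prod.smul_snd, lp.coeFn_add, lp.coeFn_smul, Pi.add_apply,
          Pi.smul_apply, smul_eq_mul]
      rw [happ]
      nlinarith [mul_le_mul_of_nonneg_left (hp2 l) ha,
        mul_le_mul_of_nonneg_left (hr2 l) (by linarith : (0:ℝ) ≤ 1 - a)]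
  have hdisj : Disjoint s D := by
    rw [Set.disjoint_left]
    rintro p ⟨hp1, hp2⟩ ⟨x, hxnn, h1, h2⟩
    have hxX : x ∈ X := hX x hxnn
    have hcoord : ∀ l, p.2 l < 0 := by
      intro l
      have hb1 := lp.norm_apply_le_norm (ENNReal.top_ne_zero) (p.2 + lpinfOne Λ) l
      have hco : (p.2 + lpinfOne Λ) l = p.2 l + 1 := by
        rw [lp.coeFn_add, Pi.add_apply]; rfl
      rw [hco, Real.norm_eq_abs] at hb1
      have habs := hb1.trans_lt hp2
      rw [abs_lt] at habs
      linarith [habs.2]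
    have hxX₀ : x ∈ X₀ := by
      rw [hX₀]
      refine ⟨hxX, ?_⟩
      refine iSup_le fun l => ?_
      have : q' l x ≤ 0 := (h2 l).trans (hcoord l).le
      exact_mod_cast this
    have := hopt x hxX₀
    linarith
  obtain ⟨f, u, hfs, hfD⟩ := geometric_hahn_banach_open hsconv hsopen hDconv hdisj
  set y : ℝ := f ((1 : ℝ), (0 : lp (fun _ : Λ => ℝ) ∞)) with hy_def
  set L : lp (fun _ : Λ => ℝ) ∞ →L[ℝ] ℝ :=
    f.comp (ContinuousLinearMap.inr ℝ ℝ (lp (fun _ : Λ => ℝ) ∞)) with hL_def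
  have hdecomp : ∀ (r : ℝ) (Φ : lp (fun _ : Λ => ℝ) ∞), f (r, Φ) = r * y + L Φ := by
    intro r Φ
    have hsplit : ((r, Φ) : ℝ × lp (fun _ : Λ => ℝ) ∞) =
        r • ((1 : ℝ), (0 : lp (fun _ : Λ => ℝ) ∞)) + ((0 : ℝ), Φ) := by
      simp [Prod.ext_iff]
    rw [hsplit, map_add, _root_.map_smul, smul_eq_mul]
    rfl
  have hmemD : ∀ (x : Fin N → ℝ), (∀ i, 0 ≤ x i) → ∀ (ρ : ℝ) (Φ : lp (fun _ : Λ => ℝ) ∞),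
      q x - q x₀ ≤ ρ → (∀ l, q' l x ≤ Φ l) → u ≤ ρ * y + L Φ := by
    intro x hxnn ρ Φ h1 h2
    have := hfD (ρ, Φ) ⟨x, hxnn, h1, h2⟩
    rwa [hdecomp] at this
  set C : ℝ := L (F a₀) with hC_def
  have huC : u ≤ C := by
    have := hmemD a₀ ha₀nn 0 (F a₀) (by linarith) (fun l => (hFa₀ l).ge)
    linarith
  have hy : 0 ≤ y := by
    by_contra hneg
    push_neg at hneg
    set ρ : ℝ := (C - u + 1) / (-y) with hρ_def
    have hρnn : 0 ≤ ρ := div_nonneg (by linarith) (by linarith)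
    have h1 := hmemD a₀ ha₀nn ρ (F a₀) (by linarith) (fun l => (hFa₀ l).ge)
    have h2 : ρ * (-y) = C - u + 1 := div_mul_cancel₀ _ (by linarith)
    have h3 : ρ * y = -(C - u + 1) := by linarith [h2]
    linarith
  have hLpos : ∀ Φ : lp (fun _ : Λ => ℝ) ∞, (∀ l, 0 ≤ Φ l) → 0 ≤ L Φ := by
    intro Φ hΦ
    by_contra hneg
    push_neg at hneg
    set τ : ℝ := (C - u + 1) / (-(L Φ)) with hτ_def
    have hτnn : 0 ≤ τ := div_nonneg (by linarith) (by linarith)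
    have hmem : u ≤ 0 * y + L (F a₀ + τ • Φ) := by
      refine hmemD a₀ ha₀nn 0 (F a₀ + τ • Φ) (by linarith) (fun l => ?_)
      have happ : (F a₀ + τ • Φ) l = F a₀ l + τ * Φ l := by
        rw [lp.coeFn_add, Pi.add_apply, lp.coeFn_smul, Pi.smul_apply, smul_eq_mul]
      rw [happ, hFa₀ l]
      have := mul_nonneg hτnn (hΦ l)
      linarith
    rw [map_add, _root_.map_smul, smul_eq_mul] at hmem
    have h2 : τ * (-(L Φ)) = C - u + 1 := div_mul_cancel₀ _ (by linarith)
    have h3 : τ * L Φ = -(C - u + 1) := by linarith [h2]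
    linarith
  have hone_norm : ‖lpinfOne Λ‖ ≤ 1 := by
    refine lp.norm_le_of_forall_le zero_le_one fun l => ?_
    have happ : (lpinfOne Λ) l = (1 : ℝ) := rfl
    rw [happ]; norm_num
  have hεineq : ∀ ε : ℝ, 0 < ε → ε ≤ 1 → -ε * (y + L (lpinfOne Λ)) < u := by
    intro ε h0 h1
    have hsmem : ((-ε, (-ε) • lpinfOne Λ) : ℝ × lp (fun _ : Λ => ℝ) ∞) ∈ s := by
      constructor
      · show -ε < 0; linarith
      · show ‖(-ε) • lpinfOne Λ + lpinfOne Λ‖ < 1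
        have heq : (-ε) • lpinfOne Λ + lpinfOne Λ = (1 - ε) • lpinfOne Λ := by
          rw [sub_smul, one_smul, neg_smul]; abel
        rw [heq, norm_smul, Real.norm_eq_abs, abs_of_nonneg (by linarith : (0:ℝ) ≤ 1 - ε)]
        calc (1 - ε) * ‖lpinfOne Λ‖ ≤ (1 - ε) * 1 :=
              mul_le_mul_of_nonneg_left hone_norm (by linarith)
          _ < 1 := by linarith
    have := hfs _ hsmem
    rw [hdecomp, _root_.map_smul, smul_eq_mul] at this
    linarith
  have hu0 : 0 ≤ u := by
    by_contra h
    push_neg at h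
    have h1 := hεineq 1 one_pos le_rfl
    set S : ℝ := y + L (lpinfOne Λ) with hS_def
    have hS : 0 < S := by linarith
    rcases le_or_gt ((-u) / (2 * S)) 1 with hle | hgt
    · have hεpos : 0 < (-u) / (2 * S) := div_pos (by linarith) (by linarith)
      have h2 := hεineq _ hεpos hle
      have h3 : ((-u) / (2 * S)) * (2 * S) = -u := div_mul_cancel₀ _ (by linarith)
      nlinarith
    · have h2 : 2 * S < -u := by
        have := (one_lt_div (by linarith : (0:ℝ) < 2 * S)).mp hgt
        linarith
      linarith
  have hCle : C ≤ 0 := by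
    have h1 : 0 ≤ L (-(F a₀)) := by
      refine hLpos _ fun l => ?_
      have happ : (-(F a₀)) l = -(F a₀ l) := by rw [lp.coeFn_neg, Pi.neg_apply]
      rw [happ, hFa₀ l]
      linarith [hq'a₀ l, hq'x₀ l]
    rw [map_neg] at h1
    linarith
  have hu00 : u = 0 := le_antisymm (huC.trans hCle) hu0
  have hC0 : C = 0 := le_antisymm hCle (hu0.trans huC)
  have hLFx₀ : L (F x₀) = 0 := by
    have h1 : 0 ≤ L (F x₀ - F a₀) := by
      refine hLpos _ fun l => ?_
      have happ : (F x₀ - F a₀) l = F x₀ l - F a₀ l := by rw [lp.coeFn_sub, Pi.sub_apply]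
      rw [happ, hFa₀ l, hFx₀ l]
      linarith [hq'a₀ l]
    have h2 : 0 ≤ L (-(F x₀)) := by
      refine hLpos _ fun l => ?_
      have happ : (-(F x₀)) l = -(F x₀ l) := by rw [lp.coeFn_neg, Pi.neg_apply]
      rw [happ, hFx₀ l]
      linarith [hq'x₀ l]
    rw [map_sub] at h1
    rw [map_neg] at h2
    linarith
  have hSpos : 0 < y + L (lpinfOne Λ) := by
    have := hεineq 1 one_pos le_rfl
    rw [hu00] at this
    linarith
  refine ⟨y, L, hy, hLpos, hSpos.ne', ?_, hLFx₀⟩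
  intro x hxX
  have hxaX : (fun i => |x i|) ∈ X := hX _ fun i => abs_nonneg _
  have h3 := hmemD (fun i => |x i|) (fun i => abs_nonneg _) (q (fun i => |x i|) - q x₀)
    (F (fun i => |x i|)) le_rfl (fun l => (hF _ hxaX l).ge)
  have h4 : L (F (fun i => |x i|)) ≤ L (F x) := by
    have h6 : 0 ≤ L (F x - F (fun i => |x i|)) := by
      refine hLpos _ fun l => ?_
      have happ : (F x - F (fun i => |x i|)) l = F x l - F (fun i => |x i|) l := by
        rw [lp.coeFn_sub, Pi.sub_apply]
      rw [happ, hF x hxX l, hF _ hxaX l]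
      linarith [habsq' l x]
    rw [map_sub] at h6
    linarith
  have h5 : q (fun i => |x i|) ≤ q x := habsq x
  rw [hu00] at h3
  rw [hLFx₀]
  nlinarith [mul_le_mul_of_nonneg_left h5 hy]
end

section
/- Yuan-type alternative from Dines/Brickman convexity: Let N ≥ 1 (and N ≥ 3 in the sphere case), A₁, A₂ ∈ 𝕊^N, and let X be either ℝ^N or the unit sphere {x ∈ ℝ^N : ‖x‖ = 1}. Then exactly one of the following holds: (a1) there exists x ∈ X with max_{i=1,2} (1/2) x^T A_i x < 0; (a2) there exists t ∈ [0,1] such that t A₁ + (1−t) A₂ is positive semidefinite. -/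
open Matrix

section aux
variable {N : ℕ}

private lemma quad_expand (M : Matrix (Fin N) (Fin N) ℝ) (a b : ℝ) (u v : Fin N → ℝ) :
    (a • u + b • v) ⬝ᵥ M *ᵥ (a • u + b • v)
      = a ^ 2 * (u ⬝ᵥ M *ᵥ u) + b ^ 2 * (v ⬝ᵥ M *ᵥ v)
        + a * b * ((u ⬝ᵥ M *ᵥ v) + (v ⬝ᵥ M *ᵥ u)) := by
  simp only [mulVec_add, mulVec_smul, dotProduct_add, add_dotProduct, dotProduct_smul,
    smul_dotProduct, smul_eq_mul]
  ring

private lemma combo_quad (A₁ A₂ : Matrix (Fin N) (Fin N) ℝ) (t : ℝ) (x : Fin N → ℝ) :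
    x ⬝ᵥ (t • A₁ + (1 - t) • A₂) *ᵥ x
      = t * (x ⬝ᵥ A₁ *ᵥ x) + (1 - t) * (x ⬝ᵥ A₂ *ᵥ x) := by
  simp [add_mulVec, smul_mulVec, dotProduct_add, dotProduct_smul, smul_eq_mul]

private lemma not_psd_neg {M : Matrix (Fin N) (Fin N) ℝ} (hs : M.IsSymm)
    (h : ¬ M.PosSemidef) : ∃ x : Fin N → ℝ, x ⬝ᵥ M *ᵥ x < 0 := by
  by_contra hc
  push_neg at hc
  exact h (PosSemidef.of_dotProduct_mulVec_nonneg (by rwa [Matrix.IsHermitian, conjTranspose_eq_transpose_of_trivial])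
    fun x => by simpa using hc x)

/-- convex combo of negatives is negative -/
private lemma combo_neg {t a b : ℝ} (ht0 : 0 ≤ t) (ht1 : t ≤ 1) (ha : a < 0) (hb : b < 0) :
    t * a + (1 - t) * b < 0 := by
  rcases eq_or_lt_of_le ht1 with h | h
  · subst h; simpa using ha
  · have h1 : t * a ≤ 0 := mul_nonpos_of_nonneg_of_nonpos ht0 ha.le
    have h2 : (1 - t) * b < 0 := mul_neg_of_pos_of_neg (by linarith) hb
    linarith

private lemma combo_neg_or {t a b : ℝ} (ht0 : 0 ≤ t) (ht1 : t ≤ 1)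
    (h : t * a + (1 - t) * b < 0) : a < 0 ∨ b < 0 := by
  by_contra hc
  push_neg at hc
  nlinarith [mul_nonneg ht0 hc.1, mul_nonneg (by linarith : (0:ℝ) ≤ 1 - t) hc.2]

/-- Key Yuan lemma: if no convex combination is PSD, some point makes both forms negative. -/
private lemma yuan_key (A₁ A₂ : Matrix (Fin N) (Fin N) ℝ) (h₁ : A₁.IsSymm) (h₂ : A₂.IsSymm)
    (h : ∀ t : ℝ, 0 ≤ t → t ≤ 1 → ¬ (t • A₁ + (1 - t) • A₂).PosSemidef) :
    ∃ x : Fin N → ℝ, (x ⬝ᵥ A₁ *ᵥ x) < 0 ∧ (x ⬝ᵥ A₂ *ᵥ x) < 0 := by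
  set q₁ : (Fin N → ℝ) → ℝ := fun x => x ⬝ᵥ A₁ *ᵥ x with hq₁
  set q₂ : (Fin N → ℝ) → ℝ := fun x => x ⬝ᵥ A₂ *ᵥ x with hq₂
  have hneg : ∀ t : ℝ, 0 ≤ t → t ≤ 1 → ∃ x, t * q₁ x + (1 - t) * q₂ x < 0 := by
    intro t ht0 ht1
    obtain ⟨x, hx⟩ := not_psd_neg ((h₁.smul t).add (h₂.smul (1 - t))) (h t ht0 ht1)
    exact ⟨x, by rwa [combo_quad] at hx⟩
  set U : Set ℝ := {t | ∃ x, t * q₁ x + (1 - t) * q₂ x < 0 ∧ q₁ x < 0} with hU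
  set V : Set ℝ := {t | ∃ x, t * q₁ x + (1 - t) * q₂ x < 0 ∧ q₂ x < 0} with hV
  have hUopen : IsOpen U := by
    have : U = ⋃ x : Fin N → ℝ, {t | t * q₁ x + (1 - t) * q₂ x < 0 ∧ q₁ x < 0} := by
      ext t; simp [hU, Set.mem_iUnion]
    rw [this]
    refine isOpen_iUnion fun x => ?_
    by_cases hq : q₁ x < 0
    · simp only [hq, and_true]
      exact isOpen_lt (by fun_prop) continuous_const
    · convert isOpen_empty using 1
      ext t; simp [hq]
  have hVopen : IsOpen V := by
    have : V = ⋃ x : Fin N → ℝ, {t | t * q₁ x + (1 - t) * q₂ x < 0 ∧ q₂ x < 0} := by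
      ext t; simp [hV, Set.mem_iUnion]
    rw [this]
    refine isOpen_iUnion fun x => ?_
    by_cases hq : q₂ x < 0
    · simp only [hq, and_true]
      exact isOpen_lt (by fun_prop) continuous_const
    · convert isOpen_empty using 1
      ext t; simp [hq]
  have hcov : Set.Icc (0:ℝ) 1 ⊆ U ∪ V := by
    rintro t ⟨ht0, ht1⟩
    obtain ⟨x, hx⟩ := hneg t ht0 ht1
    rcases combo_neg_or ht0 ht1 hx with hx1 | hx2
    · exact Or.inl ⟨x, hx, hx1⟩
    · exact Or.inr ⟨x, hx, hx2⟩
  have h1U : (Set.Icc (0:ℝ) 1 ∩ U).Nonempty := by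
    obtain ⟨x, hx⟩ := hneg 1 zero_le_one le_rfl
    refine ⟨1, ⟨zero_le_one, le_rfl⟩, x, hx, ?_⟩
    simpa using hx
  have h0V : (Set.Icc (0:ℝ) 1 ∩ V).Nonempty := by
    obtain ⟨x, hx⟩ := hneg 0 le_rfl zero_le_one
    refine ⟨0, ⟨le_rfl, zero_le_one⟩, x, hx, ?_⟩
    simpa using hx
  obtain ⟨t, ⟨ht0, ht1⟩, hU', hV'⟩ :=
    isPreconnected_Icc U V hUopen hVopen hcov h1U h0V
  obtain ⟨x₁, hfx₁, hq1x₁⟩ := hU'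
  obtain ⟨x₂, hfx₂, hq2x₂⟩ := hV'
  -- two-dimensional argument
  set f : (Fin N → ℝ) → ℝ := fun x => t * q₁ x + (1 - t) * q₂ x with hf
  set c₁ : ℝ := (x₁ ⬝ᵥ A₁ *ᵥ x₂) + (x₂ ⬝ᵥ A₁ *ᵥ x₁) with hc₁
  set c₂ : ℝ := (x₁ ⬝ᵥ A₂ *ᵥ x₂) + (x₂ ⬝ᵥ A₂ *ᵥ x₁) with hc₂
  set C : ℝ := t * c₁ + (1 - t) * c₂ with hC
  set ε : ℝ := if C ≤ 0 then 1 else -1 with hε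
  have hεC : ε * C ≤ 0 := by
    by_cases hcle : C ≤ 0 <;> simp [hε, hcle] <;> linarith
  have hε2 : ε ^ 2 = 1 := by
    by_cases hcle : C ≤ 0 <;> simp [hε, hcle]
  set y : ℝ → (Fin N → ℝ) := fun s => (1 - s) • x₁ + (s * ε) • x₂ with hy
  have hyq1 : ∀ s, q₁ (y s) = (1 - s) ^ 2 * q₁ x₁ + (s * ε) ^ 2 * q₁ x₂ + (1 - s) * (s * ε) * c₁ := by
    intro s; simp only [hy, hq₁, hc₁]; exact quad_expand A₁ (1 - s) (s * ε) x₁ x₂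
  have hyq2 : ∀ s, q₂ (y s) = (1 - s) ^ 2 * q₂ x₁ + (s * ε) ^ 2 * q₂ x₂ + (1 - s) * (s * ε) * c₂ := by
    intro s; simp only [hy, hq₂, hc₂]; exact quad_expand A₂ (1 - s) (s * ε) x₁ x₂
  have hfy : ∀ s : ℝ, 0 ≤ s → s ≤ 1 → f (y s) < 0 := by
    intro s hs0 hs1
    have hfys : f (y s) = (1 - s) ^ 2 * f x₁ + s ^ 2 * (ε ^ 2) * f x₂ + (1 - s) * s * (ε * C) := by
      simp only [hf, hyq1, hyq2, hC, hc₁, hc₂]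
      ring
    rw [hfys, hε2]
    rcases eq_or_lt_of_le hs1 with h | h
    · subst h
      simpa using hfx₂
    · have h1 : (1 - s) ^ 2 * f x₁ < 0 :=
        mul_neg_of_pos_of_neg (pow_pos (by linarith) 2) hfx₁
      have h2 : s ^ 2 * 1 * f x₂ ≤ 0 := by
        rw [mul_one]; exact mul_nonpos_of_nonneg_of_nonpos (sq_nonneg s) hfx₂.le
      have h3 : (1 - s) * s * (ε * C) ≤ 0 :=
        mul_nonpos_of_nonneg_of_nonpos (by nlinarith) hεC
      linarith
  -- second connectedness argument along the path y
  set W₁ : Set ℝ := {s | q₁ (y s) < 0} with hW₁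
  set W₂ : Set ℝ := {s | q₂ (y s) < 0} with hW₂
  have hW₁open : IsOpen W₁ := by
    have : W₁ = {s : ℝ | (1 - s) ^ 2 * q₁ x₁ + (s * ε) ^ 2 * q₁ x₂ + (1 - s) * (s * ε) * c₁ < 0} := by
      ext s; simp [hW₁, hyq1 s]
    rw [this]
    exact isOpen_lt (by fun_prop) continuous_const
  have hW₂open : IsOpen W₂ := by
    have : W₂ = {s : ℝ | (1 - s) ^ 2 * q₂ x₁ + (s * ε) ^ 2 * q₂ x₂ + (1 - s) * (s * ε) * c₂ < 0} := by
      ext s; simp [hW₂, hyq2 s]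
    rw [this]
    exact isOpen_lt (by fun_prop) continuous_const
  have hcov' : Set.Icc (0:ℝ) 1 ⊆ W₁ ∪ W₂ := by
    rintro s ⟨hs0, hs1⟩
    exact combo_neg_or ht0 ht1 (hfy s hs0 hs1)
  have h0W₁ : (Set.Icc (0:ℝ) 1 ∩ W₁).Nonempty := by
    refine ⟨0, ⟨le_rfl, zero_le_one⟩, ?_⟩
    have : q₁ (y 0) = q₁ x₁ := by rw [hyq1]; ring
    simpa [hW₁, this] using hq1x₁
  have h1W₂ : (Set.Icc (0:ℝ) 1 ∩ W₂).Nonempty := by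
    refine ⟨1, ⟨zero_le_one, le_rfl⟩, ?_⟩
    have : q₂ (y 1) = q₂ x₂ := by rw [hyq2]; nlinarith [hε2]
    simpa [hW₂, this] using hq2x₂
  obtain ⟨s, _, hs1, hs2⟩ :=
    isPreconnected_Icc W₁ W₂ hW₁open hW₂open hcov' h0W₁ h1W₂
  exact ⟨y s, hs1, hs2⟩

end aux

/-- Yuan-type alternative: for two real symmetric matrices and `X` either all of `ℝ^N`
or the (Euclidean) unit sphere (the latter for `N ≥ 3`), either both quadratic forms are
simultaneously negative at some point of `X`, or some convex combination of the matrices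
is positive semidefinite, but never both. -/
theorem stmt16 (N : ℕ) (hN : 1 ≤ N)
    (A₁ A₂ : Matrix (Fin N) (Fin N) ℝ) (h₁ : A₁.IsSymm) (h₂ : A₂.IsSymm)
    (X : Set (Fin N → ℝ))
    (hX : X = Set.univ ∨ (3 ≤ N ∧ X = {x : Fin N → ℝ | ∑ k, (x k) ^ 2 = 1})) :
    Xor'
      (∃ x ∈ X, max ((1 / 2) * (x ⬝ᵥ A₁.mulVec x)) ((1 / 2) * (x ⬝ᵥ A₂.mulVec x)) < 0)
      (∃ t : ℝ, 0 ≤ t ∧ t ≤ 1 ∧ (t • A₁ + (1 - t) • A₂).PosSemidef) := by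
  have excl : ¬ ((∃ x ∈ X, max ((1 / 2) * (x ⬝ᵥ A₁.mulVec x)) ((1 / 2) * (x ⬝ᵥ A₂.mulVec x)) < 0)
      ∧ (∃ t : ℝ, 0 ≤ t ∧ t ≤ 1 ∧ (t • A₁ + (1 - t) • A₂).PosSemidef)) := by
    rintro ⟨⟨x, -, hx⟩, t, ht0, ht1, hPSD⟩
    rw [max_lt_iff] at hx
    have ha : x ⬝ᵥ A₁ *ᵥ x < 0 := by have := hx.1; linarith
    have hb : x ⬝ᵥ A₂ *ᵥ x < 0 := by have := hx.2; linarith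
    have hge : (0:ℝ) ≤ x ⬝ᵥ (t • A₁ + (1 - t) • A₂) *ᵥ x := by simpa using hPSD.dotProduct_mulVec_nonneg x
    rw [combo_quad] at hge
    exact absurd hge (not_le.2 (combo_neg ht0 ht1 ha hb))
  by_cases hpsd : ∃ t : ℝ, 0 ≤ t ∧ t ≤ 1 ∧ (t • A₁ + (1 - t) • A₂).PosSemidef
  · exact Or.inr ⟨hpsd, fun ha => excl ⟨ha, hpsd⟩⟩
  · refine Or.inl ⟨?_, hpsd⟩
    push_neg at hpsd
    obtain ⟨x, hx1, hx2⟩ := yuan_key A₁ A₂ h₁ h₂ fun t ht0 ht1 => hpsd t ht0 ht1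
    rcases hX with hX | ⟨-, hX⟩
    · exact ⟨x, by simp [hX], max_lt (by linarith) (by linarith)⟩
    · -- sphere case: normalize x
      have hxne : x ≠ 0 := by
        rintro rfl
        simp at hx1
      obtain ⟨k, hk⟩ := Function.ne_iff.1 hxne
      have hk' : x k ≠ 0 := hk
      set n : ℝ := ∑ k, (x k) ^ 2 with hn
      have hnpos : 0 < n := by
        have h1 : (x k) ^ 2 ≤ n :=
          Finset.single_le_sum (fun i _ => sq_nonneg (x i)) (Finset.mem_univ k)
        have h2 : 0 < (x k) ^ 2 := by positivity
        linarith
      set c : ℝ := (Real.sqrt n)⁻¹ with hc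
      have hcpos : 0 < c := by
        rw [hc]
        exact inv_pos.2 (Real.sqrt_pos.2 hnpos)
      have hc2 : c ^ 2 = n⁻¹ := by
        rw [hc, inv_pow, Real.sq_sqrt hnpos.le]
      refine ⟨c • x, ?_, ?_⟩
      · rw [hX]
        simp only [Set.mem_setOf_eq, Pi.smul_apply, smul_eq_mul]
        calc ∑ j, (c * x j) ^ 2 = c ^ 2 * ∑ j, (x j) ^ 2 := by
              rw [Finset.mul_sum]; congr 1; ext j; ring
          _ = 1 := by rw [hc2, ← hn, inv_mul_cancel₀ hnpos.ne']
      · have hq : ∀ M : Matrix (Fin N) (Fin N) ℝ,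
            (c • x) ⬝ᵥ M *ᵥ (c • x) = c ^ 2 * (x ⬝ᵥ M *ᵥ x) := by
          intro M
          simp [mulVec_smul, dotProduct_smul, smul_dotProduct, smul_eq_mul]
          ring
        have h2 : 0 < c ^ 2 := by positivity
        rw [max_lt_iff]
        constructor
        · rw [hq A₁]; nlinarith
        · rw [hq A₂]; nlinarith
end
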